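/- arXiv:2110.09403 — 3 statements merged into one kernel-verified Lean document; each statement's English description precedes it below -/
import Mathlib

section
/- Fix ε ∈ (0,1), a positive integer f, and δ ∈ (0,1) with f·δ < 1, and let p = p(n) = n^{-δ}. Then with high probability as n → ∞, the random bipartite graph G(n,n,p) with parts A, B satisfies: for every subset X ⊆ A with |X| ≥ εn and every collection of pairwise disjoint non-empty subsets Y₁,…,Y_k ⊆ B with k ≥ εn and each |Y_j| ≤ f, there exist x ∈ X and j ∈ [k] such that x is adjacent to every vertex of Y_j (and symmetrically with the roles of A and B swapped). -/
open MeasureTheory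
open scoped ENNReal

/-- `(n : ℝ) ^ (-δ) ≤ 1` as an extended nonnegative real, for `δ > 0`. -/
theorem ofReal_rpow_neg_le_one (n : ℕ) (δ : ℝ) (hδ : 0 < δ) :
    ENNReal.ofReal ((n : ℝ) ^ (-δ)) ≤ 1 := by
  rcases Nat.eq_zero_or_pos n with h | h
  · subst h
    simp [Real.zero_rpow (neg_ne_zero.mpr hδ.ne')]
  · refine ENNReal.ofReal_le_one.mpr ?_
    exact Real.rpow_le_one_of_one_le_of_nonpos (by exact_mod_cast h) (by linarith)

/-- The bipartite Erdős–Rényi random graph `G(n,n,p)`: the product Bernoulli(p) measure on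
indicators of the `n × n` possible edges between the two parts. -/
noncomputable def bipMeasure (n : ℕ) (p : ℝ≥0∞) (hp : p ≤ 1) :
    Measure (Fin n × Fin n → Bool) :=
  Measure.pi fun _ => (PMF.bernoulli p.toNNReal (by simpa using ENNReal.toNNReal_mono ENNReal.one_ne_top hp)).toMeasure

/-- The good event: for every `X ⊆ A` with `|X| ≥ εn` and every collection of `k ≥ εn`
pairwise disjoint nonempty subsets `Y₁, …, Y_k ⊆ B` each of size at most `f`, some `x ∈ X`
is adjacent to all of some `Y_j`; and symmetrically with the parts swapped. -/
def GoodEvent (n : ℕ) (ε : ℝ) (f : ℕ) (ω : Fin n × Fin n → Bool) : Prop :=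
  (∀ X : Finset (Fin n), ε * n ≤ (X.card : ℝ) →
    ∀ k : ℕ, ε * n ≤ (k : ℝ) → ∀ Y : Fin k → Finset (Fin n),
      (∀ j, (Y j).Nonempty) → Pairwise (Function.onFun Disjoint Y) →
      (∀ j, (Y j).card ≤ f) →
      ∃ x ∈ X, ∃ j : Fin k, ∀ y ∈ Y j, ω (x, y) = true) ∧
  (∀ X : Finset (Fin n), ε * n ≤ (X.card : ℝ) →
    ∀ k : ℕ, ε * n ≤ (k : ℝ) → ∀ Y : Fin k → Finset (Fin n),
      (∀ j, (Y j).Nonempty) → Pairwise (Function.onFun Disjoint Y) →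
      (∀ j, (Y j).card ≤ f) →
      ∃ x ∈ X, ∃ j : Fin k, ∀ y ∈ Y j, ω (y, x) = true)

namespace GEAux

variable {ι : Type*} [Fintype ι] [DecidableEq ι]

open Classical in
/-- total weight of a predicate -/
noncomputable def W (v : ι → Bool → ℝ≥0∞) (P : (ι → Bool) → Prop) : ℝ≥0∞ :=
  ∑ ω : ι → Bool, if P ω then ∏ i, v i (ω i) else 0

lemma W_congr {v : ι → Bool → ℝ≥0∞} {P Q : (ι → Bool) → Prop} (h : ∀ ω, P ω ↔ Q ω) :
    W v P = W v Q := by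
  classical
  unfold W; exact Finset.sum_congr rfl fun ω _ => by
    congr 1; exact propext (h ω)

lemma sum_w {κ : Type*} [Fintype κ] [DecidableEq κ] (v : κ → Bool → ℝ≥0∞)
    (hv : ∀ i, v i true + v i false = 1) :
    ∑ ω : κ → Bool, ∏ i, v i (ω i) = 1 := by
  rw [← Fintype.prod_sum (fun i (b : Bool) => v i b)]
  simp only [Fintype.sum_bool, hv]
  simp

lemma W_true {v : ι → Bool → ℝ≥0∞} (hv : ∀ i, v i true + v i false = 1) :
    W v (fun _ => True) = 1 := by
  unfold W; simp only [if_pos trivial]; exact sum_w v hv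

end GEAux

namespace GEAux

variable {ι : Type*} [Fintype ι] [DecidableEq ι]

lemma univ_eq {κ : Type*} (h1 h2 : Fintype κ) : @Finset.univ κ h1 = @Finset.univ κ h2 := by
  cases Subsingleton.elim h1 h2; rfl

lemma W_inter {v : ι → Bool → ℝ≥0∞} (hv : ∀ i, v i true + v i false = 1)
    (F : Finset ι) {P Q : (ι → Bool) → Prop}
    (hP : ∀ ω ω', (∀ i ∈ F, ω i = ω' i) → P ω → P ω')
    (hQ : ∀ ω ω', (∀ i ∉ F, ω i = ω' i) → Q ω → Q ω') :
    W v (fun ω => P ω ∧ Q ω) = W v P * W v Q := by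
  classical
  set e := Equiv.piEquivPiSubtypeProd (· ∈ F) (fun _ : ι => Bool) with he
  have key : ∀ (G : (ι → Bool) → ℝ≥0∞), ∑ ω, G ω
      = ∑ a : {x // x ∈ F} → Bool, ∑ b : {x // ¬ x ∈ F} → Bool, G (e.symm (a, b)) := by
    intro G
    rw [← Equiv.sum_comp e.symm G, Fintype.sum_prod_type]
  have hmem : ∀ (a : {x // x ∈ F} → Bool) (b : {x // ¬ x ∈ F} → Bool) (i : ι),
      e.symm (a, b) i = if h : i ∈ F then a ⟨i, h⟩ else b ⟨i, h⟩ := fun a b i => rfl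
  have hw : ∀ a b, (∏ i, v i (e.symm (a, b) i))
      = (∏ i : {x // x ∈ F}, v i (a i)) * (∏ i : {x // ¬ x ∈ F}, v i (b i)) := by
    intro a b
    rw [← Fintype.prod_subtype_mul_prod_subtype (· ∈ F) (fun i => v i (e.symm (a, b) i))]
    congr 1
    · refine Finset.prod_congr (univ_eq _ _) fun i _ => ?_
      rw [hmem a b i.1, dif_pos i.2]
    · refine Finset.prod_congr (univ_eq _ _) fun i _ => ?_
      rw [hmem a b i.1, dif_neg i.2]
  have hPab : ∀ a b b', P (e.symm (a, b)) ↔ P (e.symm (a, b')) := by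
    intro a b b'
    constructor <;> intro h <;> refine hP _ _ (fun i hi => ?_) h <;>
      simp only [hmem, dif_pos hi]
  have hQab : ∀ a a' b, Q (e.symm (a, b)) ↔ Q (e.symm (a', b)) := by
    intro a a' b
    constructor <;> intro h <;> refine hQ _ _ (fun i hi => ?_) h <;>
      simp only [hmem, dif_neg hi]
  have hsumB : ∑ b : {x // ¬ x ∈ F} → Bool, ∏ i : {x // ¬ x ∈ F}, v (↑i) (b i) = 1 :=
    sum_w (fun i : {x // ¬ x ∈ F} => v ↑i) (fun i => hv ↑i)
  have hsumA : ∑ a : {x // x ∈ F} → Bool, ∏ i : {x // x ∈ F}, v (↑i) (a i) = 1 :=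
    sum_w (fun i : {x // x ∈ F} => v ↑i) (fun i => hv ↑i)
  unfold W
  rw [key, key, key]
  have hPQ : (∑ a, ∑ b, if P (e.symm (a, b)) ∧ Q (e.symm (a, b))
        then ∏ i, v i (e.symm (a, b) i) else 0)
      = (∑ a : {x // x ∈ F} → Bool,
          if P (e.symm (a, fun _ => false)) then ∏ i : {x // x ∈ F}, v i (a i) else 0)
        * (∑ b : {x // ¬ x ∈ F} → Bool,
          if Q (e.symm (fun _ => false, b)) then ∏ i : {x // ¬ x ∈ F}, v i (b i) else 0) := by
    rw [Finset.sum_mul_sum]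
    refine Finset.sum_congr rfl fun a _ => Finset.sum_congr rfl fun b _ => ?_
    rw [if_congr (and_congr (hPab a b (fun _ => false)) (hQab a (fun _ => false) b)) rfl rfl,
      hw a b]
    by_cases hp : P (e.symm (a, fun _ => false)) <;>
      by_cases hq : Q (e.symm (fun _ => false, b)) <;> simp [hp, hq]
  have hPonly : (∑ a, ∑ b, if P (e.symm (a, b)) then ∏ i, v i (e.symm (a, b) i) else 0)
      = (∑ a : {x // x ∈ F} → Bool,
          if P (e.symm (a, fun _ => false)) then ∏ i : {x // x ∈ F}, v i (a i) else 0) := by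
    calc (∑ a, ∑ b, if P (e.symm (a, b)) then ∏ i, v i (e.symm (a, b) i) else 0)
        = (∑ a : {x // x ∈ F} → Bool,
            if P (e.symm (a, fun _ => false)) then ∏ i : {x // x ∈ F}, v i (a i) else 0)
          * (∑ b : {x // ¬ x ∈ F} → Bool, ∏ i : {x // ¬ x ∈ F}, v i (b i)) := by
          rw [Finset.sum_mul_sum]
          refine Finset.sum_congr rfl fun a _ => Finset.sum_congr rfl fun b _ => ?_
          rw [if_congr (hPab a b (fun _ => false)) rfl rfl, hw a b]
          by_cases hp : P (e.symm (a, fun _ => false)) <;> simp [hp]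
      _ = _ := by rw [hsumB, mul_one]
  have hQonly : (∑ a, ∑ b, if Q (e.symm (a, b)) then ∏ i, v i (e.symm (a, b) i) else 0)
      = (∑ b : {x // ¬ x ∈ F} → Bool,
          if Q (e.symm (fun _ => false, b)) then ∏ i : {x // ¬ x ∈ F}, v i (b i) else 0) := by
    calc (∑ a, ∑ b, if Q (e.symm (a, b)) then ∏ i, v i (e.symm (a, b) i) else 0)
        = (∑ a : {x // x ∈ F} → Bool, ∏ i : {x // x ∈ F}, v i (a i))
          * (∑ b : {x // ¬ x ∈ F} → Bool,
            if Q (e.symm (fun _ => false, b)) then ∏ i : {x // ¬ x ∈ F}, v i (b i) else 0) := by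
          rw [Finset.sum_mul_sum]
          refine Finset.sum_congr rfl fun a _ => Finset.sum_congr rfl fun b _ => ?_
          rw [if_congr (hQab a (fun _ => false) b) rfl rfl, hw a b]
          by_cases hq : Q (e.symm (fun _ => false, b)) <;> simp [hq]
      _ = _ := by rw [hsumA, one_mul]
  rw [hPonly, hQonly]
  refine Eq.trans ?_ hPQ
  exact Finset.sum_congr rfl fun a _ => Finset.sum_congr rfl fun b _ => by
    congr 1


lemma W_forall {v : ι → Bool → ℝ≥0∞} (hv : ∀ i, v i true + v i false = 1)
    {τ : Type*} (T : Finset τ) (S : τ → Finset ι) (P : τ → (ι → Bool) → Prop)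
    (hdisj : (T : Set τ).Pairwise fun s t => Disjoint (S s) (S t))
    (hdep : ∀ t ∈ T, ∀ ω ω', (∀ i ∈ S t, ω i = ω' i) → P t ω → P t ω') :
    W v (fun ω => ∀ t ∈ T, P t ω) = ∏ t ∈ T, W v (P t) := by
  classical
  induction T using Finset.cons_induction with
  | empty => simpa using W_true hv
  | cons a T ha ih =>
    rw [Finset.prod_cons]
    have h1 : W v (fun ω => ∀ t ∈ Finset.cons a T ha, P t ω)
        = W v (fun ω => P a ω ∧ ∀ t ∈ T, P t ω) :=
      W_congr fun ω => by simp [Finset.forall_mem_cons]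
    have hQ : ∀ ω ω', (∀ i ∉ S a, ω i = ω' i) → (∀ t ∈ T, P t ω) → (∀ t ∈ T, P t ω') := by
      intro ω ω' hagree h t ht
      refine hdep t (Finset.mem_cons_of_mem ht) ω ω' (fun i hi => hagree i ?_) (h t ht)
      intro hia
      have hne : a ≠ t := fun h' => ha (h' ▸ ht)
      exact (Finset.disjoint_left.mp
        (hdisj (Finset.mem_coe.mpr (Finset.mem_cons_self a T))
          (Finset.mem_coe.mpr (Finset.mem_cons_of_mem ht)) hne) hia) hi
    rw [h1, W_inter hv (S a) (hdep a (Finset.mem_cons_self a T)) hQ,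
      ih (hdisj.mono (by simp [Finset.coe_cons, Set.subset_insert]))
        (fun t ht => hdep t (Finset.mem_cons_of_mem ht))]

lemma W_compl {v : ι → Bool → ℝ≥0∞} (hv : ∀ i, v i true + v i false = 1)
    (P : (ι → Bool) → Prop) : W v P + W v (fun ω => ¬ P ω) = 1 := by
  classical
  unfold W
  rw [← Finset.sum_add_distrib, ← sum_w v hv]
  exact Finset.sum_congr rfl fun ω _ => by by_cases h : P ω <;> simp [h]

lemma measurableSet_all {s : Set (ι → Bool)} : MeasurableSet s := by
  have h1 : ∀ ω : ι → Bool, MeasurableSet ({ω} : Set (ι → Bool)) := by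
    intro ω
    rw [← Set.univ_pi_singleton ω]
    exact MeasurableSet.univ_pi fun i => measurableSet_singleton _
  have h2 : s = ⋃ ω ∈ s, {ω} := by simp
  rw [h2]
  exact MeasurableSet.biUnion (Set.to_countable s) fun ω _ => h1 ω

lemma bool_meas (ν : Measure Bool) [IsProbabilityMeasure ν] : ν {true} + ν {false} = 1 := by
  rw [← measure_union (by simp) (measurableSet_singleton _)]
  have : ({true} ∪ {false} : Set Bool) = Set.univ := by
    ext b; cases b <;> simp
  rw [this, measure_univ]

lemma pi_apply (ν : Measure Bool) [IsProbabilityMeasure ν] (s : Set (ι → Bool)) :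
    Measure.pi (fun _ : ι => ν) s = W (fun _ b => ν {b}) (· ∈ s) := by
  classical
  have hsing : ∀ ω : ι → Bool, Measure.pi (fun _ : ι => ν) {ω} = ∏ i, ν {ω i} := by
    intro ω
    rw [← Set.univ_pi_singleton ω, Measure.pi_pi]
  have hs : s = ⋃ ω ∈ (Finset.univ.filter (· ∈ s) : Finset (ι → Bool)), ({ω} : Set _) := by
    ext ω; simp
  have hpd : ((Finset.univ.filter (· ∈ s) : Finset (ι → Bool)) : Set (ι → Bool)).PairwiseDisjoint
      (fun ω => ({ω} : Set (ι → Bool))) := by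
    intro x _ y _ hxy
    simp only [Function.onFun, Set.disjoint_singleton_left, Set.mem_singleton_iff]
    exact hxy
  have key : Measure.pi (fun _ : ι => ν) s
      = ∑ ω ∈ (Finset.univ.filter (· ∈ s) : Finset (ι → Bool)), ∏ i, ν {ω i} := by
    conv_lhs => rw [hs]
    rw [measure_biUnion_finset hpd (fun _ _ => measurableSet_all)]
    exact Finset.sum_congr rfl fun ω _ => hsing ω
  rw [key]
  unfold W
  rw [Finset.sum_filter]

lemma pi_all_true (ν : Measure Bool) [IsProbabilityMeasure ν] (S : Finset ι) :
    Measure.pi (fun _ : ι => ν) {ω : ι → Bool | ∀ i ∈ S, ω i = true}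
      = ν {true} ^ S.card := by
  classical
  have h1 : {ω : ι → Bool | ∀ i ∈ S, ω i = true}
      = Set.pi Set.univ (fun i => if i ∈ S then ({true} : Set Bool) else Set.univ) := by
    ext ω
    simp only [Set.mem_pi, Set.mem_univ, forall_true_left, Set.mem_setOf_eq]
    constructor
    · intro h i
      by_cases hi : i ∈ S <;> simp [hi, h]
    · intro h i hi
      have := h i
      rw [if_pos hi] at this
      simpa using this
  rw [h1, Measure.pi_pi]
  have h2 : ∀ i : ι, ν (if i ∈ S then ({true} : Set Bool) else Set.univ)
      = if i ∈ S then ν {true} else 1 := by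
    intro i
    by_cases hi : i ∈ S
    · simp [hi]
    · simp only [if_neg hi]
      exact measure_univ
  rw [Finset.prod_congr rfl fun i _ => h2 i, Finset.prod_ite_mem, Finset.univ_inter,
    Finset.prod_const]

lemma pi_event_bound (ν : Measure Bool) [IsProbabilityMeasure ν] {τ : Type*}
    (T : Finset τ) (S : τ → Finset ι)
    (hdisj : (T : Set τ).Pairwise fun s t => Disjoint (S s) (S t))
    {f : ℕ} (hcard : ∀ t ∈ T, (S t).card ≤ f) :
    Measure.pi (fun _ : ι => ν) {ω : ι → Bool | ∀ t ∈ T, ∃ i ∈ S t, ω i = false}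
      ≤ (1 - ν {true} ^ f) ^ T.card := by
  classical
  have hv : ∀ _ : ι, ν {true} + ν {false} = 1 := fun _ => bool_meas ν
  rw [pi_apply]
  have h1 : W (fun _ b => ν {b}) (· ∈ {ω : ι → Bool | ∀ t ∈ T, ∃ i ∈ S t, ω i = false})
      = W (fun _ b => ν {b}) (fun ω => ∀ t ∈ T, (fun t ω => ∃ i ∈ S t, ω i = false) t ω) :=
    W_congr fun ω => by simp
  rw [h1, W_forall (v := fun _ b => ν {b}) hv T S _ hdisj ?hdep]
  case hdep =>
    intro t _ ω ω' hagree ⟨i, hi, hif⟩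
    exact ⟨i, hi, (hagree i hi) ▸ hif⟩
  calc ∏ t ∈ T, W (fun _ b => ν {b}) (fun ω => ∃ i ∈ S t, ω i = false)
      ≤ ∏ t ∈ T, (1 - ν {true} ^ f) := by
        refine Finset.prod_le_prod' fun t ht => ?_
        have hcompl := W_compl (ι := ι) (v := fun _ b => ν {b}) hv (fun ω => ∀ i ∈ S t, ω i = true)
        have hWn : W (fun (_ : ι) (b : Bool) => ν {b}) (fun ω => ∀ i ∈ S t, ω i = true)
            = ν {true} ^ (S t).card := by
          rw [show W (fun (_ : ι) (b : Bool) => ν {b}) (fun ω => ∀ i ∈ S t, ω i = true)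
              = W (fun _ b => ν {b}) (· ∈ {ω : ι → Bool | ∀ i ∈ S t, ω i = true}) from
            W_congr fun ω => by simp, ← pi_apply, pi_all_true]
        have hWP : W (fun (_ : ι) (b : Bool) => ν {b}) (fun ω => ∃ i ∈ S t, ω i = false)
            = 1 - ν {true} ^ (S t).card := by
          have heq : W (fun (_ : ι) (b : Bool) => ν {b}) (fun ω => ∃ i ∈ S t, ω i = false)
              = W (fun (_ : ι) (b : Bool) => ν {b})
                (fun ω => ¬ ∀ i ∈ S t, ω i = true) := by
            refine W_congr fun ω => ?_
            simp only [not_forall]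
            constructor
            · rintro ⟨i, hi, hif⟩
              exact ⟨i, hi, by simp [hif]⟩
            · rintro ⟨i, hi, hif⟩
              exact ⟨i, hi, by simpa using hif⟩
          rw [heq]
          rw [hWn, add_comm] at hcompl
          rw [← hWn]
          exact ENNReal.eq_sub_of_add_eq (hWn ▸ ENNReal.pow_ne_top (measure_ne_top ν _)) (hWn ▸ hcompl)
        rw [hWP]
        refine tsub_le_tsub_left ?_ 1
        exact pow_le_pow_of_le_one zero_le prob_le_one (hcard t ht)
    _ = (1 - ν {true} ^ f) ^ T.card := Finset.prod_const _


end GEAux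

namespace GEAux

lemma bern_true (p : ℝ≥0∞) (hp : p ≤ 1) : (PMF.bernoulli p.toNNReal (by simpa using ENNReal.toNNReal_mono ENNReal.one_ne_top hp)).toMeasure {true} = p := by
  rw [PMF.toMeasure_apply_singleton _ _ (measurableSet_singleton _)]
  exact (PMF.bernoulli_apply (p := p.toNNReal) _ true).trans
    (ENNReal.coe_toNNReal (ne_top_of_le_ne_top ENNReal.one_ne_top hp))

lemma event_le (n m f : ℕ) (p : ℝ≥0∞) (hp : p ≤ 1) (b : Bool) (X : Finset (Fin n))
    (g : Fin n → Option (Fin m))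
    (hcard : ∀ j : Fin m, (Finset.univ.filter (fun y => g y = some j)).card ≤ f) :
    bipMeasure n p hp {ω | ∀ x ∈ X, ∀ j : Fin m,
        ∃ y ∈ Finset.univ.filter (fun y => g y = some j), cond b (ω (y, x)) (ω (x, y)) = false}
      ≤ (1 - p ^ f) ^ (X.card * m) := by
  classical
  have hbern : (PMF.bernoulli p.toNNReal (by simpa using ENNReal.toNNReal_mono ENNReal.one_ne_top hp)).toMeasure {true} = p := bern_true p hp
  set S : Fin n × Fin m → Finset (Fin n × Fin n) := fun t =>
    (Finset.univ.filter (fun y => g y = some t.2)).image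
      (fun y => cond b (y, t.1) (t.1, y)) with hS
  have hseteq : {ω : Fin n × Fin n → Bool | ∀ x ∈ X, ∀ j : Fin m,
      ∃ y ∈ Finset.univ.filter (fun y => g y = some j), cond b (ω (y, x)) (ω (x, y)) = false}
      = {ω : Fin n × Fin n → Bool |
          ∀ t ∈ X ×ˢ (Finset.univ : Finset (Fin m)), ∃ i ∈ S t, ω i = false} := by
    ext ω
    simp only [Set.mem_setOf_eq]
    constructor
    · rintro h ⟨x, j⟩ ht
      obtain ⟨y, hy, hyf⟩ := h x (Finset.mem_product.mp ht).1 j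
      refine ⟨cond b (y, x) (x, y), Finset.mem_image_of_mem _ hy, ?_⟩
      cases b <;> simpa using hyf
    · intro h x hx j
      obtain ⟨i, hi, hif⟩ := h (x, j) (Finset.mem_product.mpr ⟨hx, Finset.mem_univ _⟩)
      obtain ⟨y, hy, rfl⟩ := Finset.mem_image.mp hi
      exact ⟨y, hy, by cases b <;> simpa using hif⟩
  have hdisj : ((X ×ˢ (Finset.univ : Finset (Fin m)) : Finset (Fin n × Fin m)) :
      Set (Fin n × Fin m)).Pairwise fun s t => Disjoint (S s) (S t) := by
    rintro ⟨x, j⟩ _ ⟨x', j'⟩ _ hne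
    rw [Finset.disjoint_left]
    rintro i hi hi'
    obtain ⟨y, hy, rfl⟩ := Finset.mem_image.mp hi
    obtain ⟨y', hy', heq⟩ := Finset.mem_image.mp hi'
    have hxy : x = x' ∧ y = y' := by
      cases b
      · simp only [Bool.cond_false, Prod.mk.injEq] at heq
        exact ⟨heq.1.symm, heq.2.symm⟩
      · simp only [Bool.cond_true, Prod.mk.injEq] at heq
        exact ⟨heq.2.symm, heq.1.symm⟩
    obtain ⟨hx1, hy1⟩ := hxy
    simp only [Finset.mem_filter] at hy hy'
    apply hne
    have hj : j = j' := by
      have := hy.2.symm.trans (hy1 ▸ hy'.2)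
      exact Option.some_inj.mp this.symm |>.symm
    rw [hx1, hj]
  have hScard : ∀ t ∈ X ×ˢ (Finset.univ : Finset (Fin m)), (S t).card ≤ f := fun t _ =>
    le_trans Finset.card_image_le (hcard t.2)
  unfold bipMeasure
  rw [hseteq]
  have hb := pi_event_bound (ι := Fin n × Fin n) ((PMF.bernoulli p.toNNReal (by simpa using ENNReal.toNNReal_mono ENNReal.one_ne_top hp)).toMeasure)
    (X ×ˢ (Finset.univ : Finset (Fin m))) S hdisj hScard
  rw [hbern] at hb
  refine le_trans hb (le_of_eq ?_)
  rw [Finset.card_product, Finset.card_univ, Fintype.card_fin]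

end GEAux

namespace GEAux

lemma bad_le (n f : ℕ) (ε : ℝ) (p : ℝ≥0∞) (hp : p ≤ 1) :
    bipMeasure n p hp {ω | ¬ GoodEvent n ε f ω}
      ≤ (2 * 2 ^ n * (⌈ε * n⌉₊ + 1) ^ n : ℕ) * (1 - p ^ f) ^ (⌈ε * n⌉₊ * ⌈ε * n⌉₊) := by
  classical
  set m := ⌈ε * n⌉₊ with hm
  set fib : (Fin n → Option (Fin m)) → Fin m → Finset (Fin n) :=
    fun g j => Finset.univ.filter (fun y => g y = some j) with hfibdef
  set E : Bool × Finset (Fin n) × (Fin n → Option (Fin m)) → Set (Fin n × Fin n → Bool) :=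
    fun i => {ω | ∀ x ∈ i.2.1, ∀ j : Fin m, ∃ y ∈ fib i.2.2 j,
      cond i.1 (ω (y, x)) (ω (x, y)) = false} with hE
  set valid : Bool × Finset (Fin n) × (Fin n → Option (Fin m)) → Prop :=
    fun i => i.2.1.card = m ∧ ∀ j : Fin m, (fib i.2.2 j).card ≤ f with hvalid
  have hcover : {ω | ¬ GoodEvent n ε f ω} ⊆ ⋃ i ∈ Finset.univ.filter valid, E i := by
    intro ω hω
    have main : ∀ bb : Bool, ¬ (∀ X : Finset (Fin n), ε * n ≤ (X.card : ℝ) →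
        ∀ k : ℕ, ε * n ≤ (k : ℝ) → ∀ Y : Fin k → Finset (Fin n),
        (∀ j, (Y j).Nonempty) → Pairwise (Function.onFun Disjoint Y) →
        (∀ j, (Y j).card ≤ f) →
        ∃ x ∈ X, ∃ j : Fin k, ∀ y ∈ Y j, cond bb (ω (y, x)) (ω (x, y)) = true) →
        ω ∈ ⋃ i ∈ Finset.univ.filter valid, E i := by
      intro bb hbad
      push_neg at hbad
      obtain ⟨X₀, hX₀, k, hk, Y, hne, hdisjY, hcards, hwit⟩ := hbad
      have hmX : m ≤ X₀.card := Nat.ceil_le.mpr hX₀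
      have hmk : m ≤ k := Nat.ceil_le.mpr hk
      obtain ⟨X, hXsub, hXcard⟩ := Finset.exists_subset_card_eq hmX
      set g : Fin n → Option (Fin m) := fun y =>
        if h : ∃ j : Fin m, y ∈ Y (Fin.castLE hmk j) then some h.choose else none with hg
      have hfib : ∀ j : Fin m, fib g j = Y (Fin.castLE hmk j) := by
        intro j
        ext y
        simp only [hfibdef, Finset.mem_filter, Finset.mem_univ, true_and, hg]
        constructor
        · intro hy
          by_cases h : ∃ j' : Fin m, y ∈ Y (Fin.castLE hmk j')
          · rw [dif_pos h, Option.some_inj] at hy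
            exact hy ▸ h.choose_spec
          · rw [dif_neg h] at hy
            exact absurd hy (by simp)
        · intro hy
          have hex : ∃ j' : Fin m, y ∈ Y (Fin.castLE hmk j') := ⟨j, hy⟩
          rw [dif_pos hex, Option.some_inj]
          by_contra hne'
          have hC : Fin.castLE hmk hex.choose ≠ Fin.castLE hmk j :=
            fun hEq => hne' (Fin.castLE_injective hmk hEq)
          exact (Finset.disjoint_left.mp (hdisjY hC) hex.choose_spec) hy
      have hval : (bb, X, g) ∈ Finset.univ.filter valid := by
        simp only [Finset.mem_filter, Finset.mem_univ, true_and, hvalid]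
        exact ⟨hXcard, fun j => by rw [hfib j]; exact hcards _⟩
      have hmemE : ω ∈ E (bb, X, g) := by
        intro x hx j
        obtain ⟨y, hy, hyf⟩ := hwit x (hXsub hx) (Fin.castLE hmk j)
        exact ⟨y, (hfib j).symm ▸ hy, by simpa using hyf⟩
      exact Set.mem_iUnion₂.mpr ⟨(bb, X, g), hval, hmemE⟩
    rcases not_and_or.mp hω with h | h
    · exact main false h
    · exact main true h
  refine le_trans (measure_mono hcover) ?_
  refine le_trans (measure_biUnion_finset_le _ _) ?_
  have hEbound : ∀ i ∈ Finset.univ.filter valid,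
      bipMeasure n p hp (E i) ≤ (1 - p ^ f) ^ (m * m) := by
    rintro ⟨b, X, g⟩ hi
    simp only [Finset.mem_filter, Finset.mem_univ, true_and, hvalid] at hi
    have h1 := event_le n m f p hp b X g hi.2
    rw [hi.1] at h1
    exact h1
  refine le_trans (Finset.sum_le_sum hEbound) ?_
  rw [Finset.sum_const, nsmul_eq_mul]
  refine mul_le_mul_left ?_ _
  have hcardle : (Finset.univ.filter valid).card ≤ 2 * 2 ^ n * (m + 1) ^ n := by
    refine le_trans (Finset.card_filter_le _ _) ?_
    rw [Finset.card_univ, Fintype.card_prod, Fintype.card_prod, Fintype.card_bool,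
      Fintype.card_finset, Fintype.card_fin, Fintype.card_fun, Fintype.card_option,
      Fintype.card_fin, Fintype.card_fin]
    exact le_of_eq (by ring)
  exact_mod_cast hcardle

end GEAux

namespace GEAux

open Filter Real

lemma tendsto_g (c ε2 : ℝ) (hc : 1 < c) (hε2 : 0 < ε2) :
    Tendsto (fun n : ℕ => (n : ℝ) * Real.log 2 + n * Real.log (n + 2) - ε2 * (n : ℝ) ^ c)
      atTop atBot := by
  have hd : 0 < c - 1 := by linarith
  have hRtend : Tendsto (fun x : ℝ => ε2 / 3 * x ^ (c - 1)) atTop atTop :=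
    (tendsto_rpow_atTop hd).const_mul_atTop (by positivity)
  have ev1R : ∀ᶠ x : ℝ in atTop, Real.log x ≤ ε2 / 3 * x ^ (c - 1) := by
    have h := (isLittleO_log_rpow_atTop hd).def (by positivity : (0:ℝ) < ε2 / 3)
    filter_upwards [h, eventually_ge_atTop (0:ℝ)] with x hx hx0
    calc Real.log x ≤ ‖Real.log x‖ := le_abs_self _
      _ ≤ ε2 / 3 * ‖x ^ (c - 1)‖ := hx
      _ = ε2 / 3 * x ^ (c - 1) := by
          rw [Real.norm_eq_abs, abs_of_nonneg (Real.rpow_nonneg hx0 _)]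
  have ev1 : ∀ᶠ n : ℕ in atTop, Real.log n ≤ ε2 / 3 * (n:ℝ) ^ (c - 1) :=
    tendsto_natCast_atTop_atTop.eventually ev1R
  have ev2 : ∀ᶠ n : ℕ in atTop, Real.log 2 + Real.log 3 ≤ ε2 / 3 * (n:ℝ) ^ (c - 1) :=
    tendsto_natCast_atTop_atTop.eventually (hRtend.eventually_ge_atTop _)
  have ev3 : ∀ᶠ n : ℕ in atTop, (1:ℝ) ≤ ε2 / 3 * (n:ℝ) ^ (c - 1) :=
    tendsto_natCast_atTop_atTop.eventually (hRtend.eventually_ge_atTop _)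
  refine tendsto_atBot_mono' atTop ?_
    (tendsto_neg_atBot_iff.mpr tendsto_natCast_atTop_atTop)
  filter_upwards [ev1, ev2, ev3, eventually_ge_atTop 1] with n h1 h2 h3 h4
  have hn1 : (1:ℝ) ≤ n := by exact_mod_cast h4
  have hnpos : (0:ℝ) < n := by linarith
  have hlog : Real.log ((n:ℝ) + 2) ≤ Real.log 3 + Real.log n := by
    rw [← Real.log_mul (by norm_num) (ne_of_gt hnpos)]
    exact Real.log_le_log (by linarith) (by linarith)
  have hsplit : (n:ℝ) ^ c = n * (n:ℝ) ^ (c - 1) := by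
    conv_lhs => rw [show c = 1 + (c - 1) by ring]
    rw [Real.rpow_add hnpos, Real.rpow_one]
  have hbr : Real.log 2 + Real.log 3 + Real.log n - ε2 * (n:ℝ) ^ (c - 1) ≤ -1 := by
    linarith
  calc (n:ℝ) * Real.log 2 + n * Real.log (n + 2) - ε2 * (n:ℝ) ^ c
      ≤ n * Real.log 2 + n * (Real.log 3 + Real.log n) - ε2 * (n * (n:ℝ) ^ (c - 1)) := by
        rw [hsplit]
        have := mul_le_mul_of_nonneg_left hlog (le_of_lt hnpos)
        linarith
    _ = n * (Real.log 2 + Real.log 3 + Real.log n - ε2 * (n:ℝ) ^ (c - 1)) := by ring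
    _ ≤ n * (-1) := mul_le_mul_of_nonneg_left hbr (le_of_lt hnpos)
    _ = -(n:ℝ) := by ring

lemma Rlim (ε δ : ℝ) (hε0 : 0 < ε) (hε1 : ε < 1) (hδ0 : 0 < δ) (f : ℕ)
    (hfδ : (f:ℝ) * δ < 1) :
    Tendsto (fun n : ℕ => ((2 * 2 ^ n * (⌈ε * ↑n⌉₊ + 1) ^ n : ℕ) : ℝ) *
      (1 - ((n:ℝ) ^ (-δ)) ^ f) ^ (⌈ε * (n:ℝ)⌉₊ * ⌈ε * (n:ℝ)⌉₊)) atTop (nhds 0) := by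
  set c := 2 - (f:ℝ) * δ with hcdef
  have hc : 1 < c := by rw [hcdef]; linarith
  have ht0 : ∀ n : ℕ, 0 ≤ ((n:ℝ) ^ (-δ)) ^ f :=
    fun n => pow_nonneg (Real.rpow_nonneg (Nat.cast_nonneg n) _) _
  have ht1 : ∀ n : ℕ, 1 ≤ n → ((n:ℝ) ^ (-δ)) ^ f ≤ 1 := fun n hn =>
    pow_le_one₀ (Real.rpow_nonneg (Nat.cast_nonneg n) _)
      (Real.rpow_le_one_of_one_le_of_nonpos (by exact_mod_cast hn) (by linarith))
  refine squeeze_zero' (g := fun n : ℕ => 2 * Real.exp ((n:ℝ) * Real.log 2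
    + n * Real.log ((n:ℝ) + 2) - ε ^ 2 * (n:ℝ) ^ c)) ?_ ?_ ?_
  · filter_upwards [eventually_ge_atTop 1] with n hn
    exact mul_nonneg (Nat.cast_nonneg _) (pow_nonneg (by linarith [ht1 n hn]) _)
  · filter_upwards [eventually_ge_atTop 1] with n hn
    have hn1 : (1:ℝ) ≤ n := by exact_mod_cast hn
    have hnpos : (0:ℝ) < n := by linarith
    set t := ((n:ℝ) ^ (-δ)) ^ f with htdef
    set m := ⌈ε * (n:ℝ)⌉₊ with hmdef
    have hm_low : ε * n ≤ (m:ℝ) := Nat.le_ceil _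
    have hm_up : (m:ℝ) ≤ (n:ℝ) := by
      have : m ≤ n := Nat.ceil_le.mpr (by nlinarith)
      exact_mod_cast this
    have htval : t = (n:ℝ) ^ (-((f:ℝ) * δ)) := by
      rw [htdef, ← Real.rpow_natCast ((n:ℝ) ^ (-δ)) f,
        ← Real.rpow_mul (le_of_lt hnpos)]
      ring_nf
    have hstep2 : ε ^ 2 * (n:ℝ) ^ c ≤ t * ((m:ℝ) * m) := by
      have hnc : (n:ℝ) ^ c = (n:ℝ) ^ (-((f:ℝ) * δ)) * (n:ℝ) ^ (2:ℝ) := by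
        rw [← Real.rpow_add hnpos]; congr 1; rw [hcdef]; ring
      have h1 : (ε * n) * (ε * n) ≤ (m:ℝ) * m :=
        mul_le_mul hm_low hm_low (by positivity) (le_trans (by positivity) hm_low)
      rw [hnc, htval, Real.rpow_two]
      have hpw : (0:ℝ) ≤ (n:ℝ) ^ (-((f:ℝ) * δ)) := Real.rpow_nonneg (le_of_lt hnpos) _
      nlinarith [hpw, h1]
    have hstep1 : (1 - t) ^ (m * m) ≤ Real.exp (-(t * ((m:ℝ) * m))) := by
      have hexp : 1 - t ≤ Real.exp (-t) := by
        have := Real.add_one_le_exp (-t)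
        linarith
      calc (1 - t) ^ (m * m) ≤ Real.exp (-t) ^ (m * m) :=
            pow_le_pow_left₀ (by linarith [ht1 n hn]) hexp _
        _ = Real.exp (-(t * ((m:ℝ) * m))) := by
            rw [← Real.exp_nat_mul]; congr 1; push_cast; ring
    have hstep3 : Real.exp (-(t * ((m:ℝ) * m))) ≤ Real.exp (-(ε ^ 2 * (n:ℝ) ^ c)) :=
      Real.exp_le_exp.mpr (neg_le_neg hstep2)
    have hN : ((2 * 2 ^ n * (m + 1) ^ n : ℕ) : ℝ) ≤ 2 * 2 ^ n * ((n:ℝ) + 2) ^ n := by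
      push_cast
      have : ((m:ℝ) + 1) ^ n ≤ ((n:ℝ) + 2) ^ n :=
        pow_le_pow_left₀ (by positivity) (by linarith) n
      nlinarith [pow_pos (by norm_num : (0:ℝ) < 2) n, pow_nonneg (by positivity : (0:ℝ) ≤ (m:ℝ)+1) n]
    calc ((2 * 2 ^ n * (m + 1) ^ n : ℕ) : ℝ) * (1 - t) ^ (m * m)
        ≤ (2 * 2 ^ n * ((n:ℝ) + 2) ^ n) * Real.exp (-(ε ^ 2 * (n:ℝ) ^ c)) := by
          refine mul_le_mul hN (hstep1.trans hstep3)
            (pow_nonneg (by linarith [ht1 n hn]) _) (by positivity)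
      _ = 2 * Real.exp ((n:ℝ) * Real.log 2 + n * Real.log ((n:ℝ) + 2) - ε ^ 2 * (n:ℝ) ^ c) := by
          rw [show (n:ℝ) * Real.log 2 + n * Real.log ((n:ℝ) + 2) - ε ^ 2 * (n:ℝ) ^ c
              = (n:ℝ) * Real.log 2 + ((n:ℝ) * Real.log ((n:ℝ) + 2)
                + -(ε ^ 2 * (n:ℝ) ^ c)) by ring,
            Real.exp_add, Real.exp_add]
          rw [Real.exp_nat_mul, Real.exp_nat_mul, Real.exp_log (by norm_num : (0:ℝ) < 2),
            Real.exp_log (by linarith : (0:ℝ) < (n:ℝ) + 2)]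
          ring
  · have hg := tendsto_g c (ε ^ 2) hc (by positivity)
    have h2 : Tendsto (fun n : ℕ => Real.exp ((n:ℝ) * Real.log 2
        + n * Real.log ((n:ℝ) + 2) - ε ^ 2 * (n:ℝ) ^ c)) atTop (nhds 0) :=
      Real.tendsto_exp_atBot.comp hg
    simpa using h2.const_mul 2

end GEAux


/-- With high probability as `n → ∞`, the random bipartite graph `G(n,n,n^{-δ})` (with
`fδ < 1`) satisfies the good event. -/
theorem goodEvent_whp (ε : ℝ) (hε : ε ∈ Set.Ioo (0 : ℝ) 1) (f : ℕ) (hf : 0 < f)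
    (δ : ℝ) (hδ : δ ∈ Set.Ioo (0 : ℝ) 1) (hfδ : (f : ℝ) * δ < 1) :
    Filter.Tendsto
      (fun n : ℕ =>
        bipMeasure n (ENNReal.ofReal ((n : ℝ) ^ (-δ))) (ofReal_rpow_neg_le_one n δ hδ.1)
          {ω | GoodEvent n ε f ω})
      Filter.atTop (nhds 1) := by
  obtain ⟨hε0, hε1⟩ := hε
  obtain ⟨hδ0, hδ1⟩ := hδ
  have hprob : ∀ n : ℕ, IsProbabilityMeasure
      (bipMeasure n (ENNReal.ofReal ((n : ℝ) ^ (-δ))) (ofReal_rpow_neg_le_one n δ hδ0)) := by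
    intro n
    unfold bipMeasure
    infer_instance
  have ht0 : ∀ n : ℕ, 0 ≤ ((n:ℝ) ^ (-δ)) ^ f :=
    fun n => pow_nonneg (Real.rpow_nonneg (Nat.cast_nonneg n) _) _
  have ht1 : ∀ n : ℕ, ((n:ℝ) ^ (-δ)) ^ f ≤ 1 := by
    intro n
    rcases Nat.eq_zero_or_pos n with h | h
    · subst h
      rw [Nat.cast_zero, Real.zero_rpow (neg_ne_zero.mpr (ne_of_gt hδ0)),
        zero_pow (Nat.pos_iff_ne_zero.mp hf)]
      norm_num
    · exact pow_le_one₀ (Real.rpow_nonneg (Nat.cast_nonneg n) _)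
        (Real.rpow_le_one_of_one_le_of_nonpos (by exact_mod_cast h) (by linarith))
  have hgood_eq : ∀ n : ℕ,
      bipMeasure n (ENNReal.ofReal ((n : ℝ) ^ (-δ))) (ofReal_rpow_neg_le_one n δ hδ0)
        {ω | GoodEvent n ε f ω}
      = 1 - bipMeasure n (ENNReal.ofReal ((n : ℝ) ^ (-δ))) (ofReal_rpow_neg_le_one n δ hδ0)
        {ω | ¬ GoodEvent n ε f ω} := by
    intro n
    have h1 := prob_compl_eq_one_sub
      (μ := bipMeasure n (ENNReal.ofReal ((n : ℝ) ^ (-δ))) (ofReal_rpow_neg_le_one n δ hδ0))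
      (s := {ω | ¬ GoodEvent n ε f ω}) GEAux.measurableSet_all
    rw [← h1]
    congr 1
    ext ω
    simp
  have hle : ∀ n : ℕ,
      bipMeasure n (ENNReal.ofReal ((n : ℝ) ^ (-δ))) (ofReal_rpow_neg_le_one n δ hδ0)
        {ω | ¬ GoodEvent n ε f ω}
      ≤ ENNReal.ofReal (((2 * 2 ^ n * (⌈ε * (n:ℝ)⌉₊ + 1) ^ n : ℕ) : ℝ) *
          (1 - ((n:ℝ) ^ (-δ)) ^ f) ^ (⌈ε * (n:ℝ)⌉₊ * ⌈ε * (n:ℝ)⌉₊)) := by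
    intro n
    refine le_trans (GEAux.bad_le n f ε _ _) (le_of_eq ?_)
    have hq : (ENNReal.ofReal ((n : ℝ) ^ (-δ))) ^ f
        = ENNReal.ofReal (((n:ℝ) ^ (-δ)) ^ f) :=
      (ENNReal.ofReal_pow (Real.rpow_nonneg (Nat.cast_nonneg n) _) f).symm
    have hsub : (1 : ℝ≥0∞) - ENNReal.ofReal (((n:ℝ) ^ (-δ)) ^ f)
        = ENNReal.ofReal (1 - ((n:ℝ) ^ (-δ)) ^ f) := by
      rw [ENNReal.ofReal_sub 1 (ht0 n), ENNReal.ofReal_one]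
    rw [hq, hsub, ← ENNReal.ofReal_pow (by linarith [ht1 n]),
      ← ENNReal.ofReal_natCast, ← ENNReal.ofReal_mul (Nat.cast_nonneg _)]
  have hbadto0 : Filter.Tendsto (fun n : ℕ =>
      bipMeasure n (ENNReal.ofReal ((n : ℝ) ^ (-δ))) (ofReal_rpow_neg_le_one n δ hδ0)
        {ω | ¬ GoodEvent n ε f ω}) Filter.atTop (nhds 0) := by
    refine tendsto_of_tendsto_of_tendsto_of_le_of_le tendsto_const_nhds ?_
      (fun n => zero_le) hle
    rw [show (0 : ℝ≥0∞) = ENNReal.ofReal 0 from ENNReal.ofReal_zero.symm]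
    exact ENNReal.tendsto_ofReal (GEAux.Rlim ε δ hε0 hε1 hδ0 f hfδ)
  have hfinal : Filter.Tendsto (fun n : ℕ =>
      1 - bipMeasure n (ENNReal.ofReal ((n : ℝ) ^ (-δ))) (ofReal_rpow_neg_le_one n δ hδ0)
        {ω | ¬ GoodEvent n ε f ω}) Filter.atTop (nhds (1 - 0)) :=
    ENNReal.Tendsto.sub tendsto_const_nhds hbadto0 (Or.inl ENNReal.one_ne_top)
  rw [tsub_zero] at hfinal
  exact Filter.Tendsto.congr (fun n => (hgood_eq n).symm) hfinal
end

section
/- For every ε ∈ (0,1) there exists n₀ such that for all n ≥ n₀ there is a graph H whose vertex set is partitioned into sets A and B of size n each, such that: (1) A and B are cliques in H; (2) every vertex of H is non-adjacent to at most εn other vertices of H; and (3) for every integer t ≥ (1+2ε)n, H contains no K_t-minor. -/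
open Finset

/-- A graph `G` contains a `K_t`-minor: there are `t` pairwise disjoint nonempty vertex subsets,
each inducing a connected subgraph, with an edge of `G` between every two of them. -/
def SimpleGraph.HasKMinor {V : Type*} (G : SimpleGraph V) (t : ℕ) : Prop :=
  ∃ Z : Fin t → Set V,
    (∀ i, (Z i).Nonempty) ∧
    Pairwise (Function.onFun Disjoint Z) ∧
    (∀ i, (G.induce (Z i)).Connected) ∧
    Pairwise fun i j => ∃ a ∈ Z i, ∃ b ∈ Z j, G.Adj a b


section Merge
variable {I α : Type*} [Fintype I] [DecidableEq I] [Fintype α] [DecidableEq α]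

def DependsOnF (P : (I → α) → Prop) (U : Finset I) : Prop :=
  ∀ ω ω' : I → α, (∀ i ∈ U, ω i = ω' i) → (P ω ↔ P ω')

lemma card_filter_and_mul (P Q : (I → α) → Prop) [DecidablePred P] [DecidablePred Q]
    (U W : Finset I) (hP : DependsOnF P U) (hQ : DependsOnF Q W) (hUW : Disjoint U W) :
    ((univ : Finset (I → α)).filter fun ω => P ω ∧ Q ω).card * Fintype.card (I → α)
      = ((univ : Finset (I → α)).filter P).card * ((univ : Finset (I → α)).filter Q).card := by
  classical
  set m : (I → α) → (I → α) → (I → α) := fun u v i => if i ∈ U then u i else v i with hm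
  have hmU : ∀ u v, ∀ i ∈ U, m u v i = u i := by intro u v i hi; simp [hm, hi]
  have hmW : ∀ u v, ∀ i ∈ W, m u v i = v i := by
    intro u v i hi
    have : i ∉ U := fun h => (Finset.disjoint_left.mp hUW h) hi
    simp [hm, this]
  have key : (((univ : Finset (I → α)).filter P) ×ˢ ((univ : Finset (I → α)).filter Q)).card
      = (((univ : Finset (I → α)).filter fun ω => P ω ∧ Q ω) ×ˢ (univ : Finset (I → α))).card := by
    apply Finset.card_nbij' (i := fun p => (m p.1 p.2, m p.2 p.1))
      (j := fun p => (m p.1 p.2, m p.2 p.1))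
    · rintro ⟨u, v⟩ hp
      simp only [Finset.mem_coe, Finset.mem_product, Finset.mem_filter, Finset.mem_univ, true_and] at hp ⊢
      refine ⟨⟨?_, ?_⟩, trivial⟩
      · exact (hP (m u v) u (hmU u v)).mpr hp.1
      · exact (hQ (m u v) v (hmW u v)).mpr hp.2
    · rintro ⟨x, y⟩ hp
      simp only [Finset.mem_coe, Finset.mem_product, Finset.mem_filter, Finset.mem_univ, true_and, and_true] at hp ⊢
      constructor
      · exact (hP (m x y) x (hmU x y)).mpr hp.1
      · exact (hQ (m y x) x (hmW y x)).mpr hp.2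
    · rintro ⟨u, v⟩ _
      have h1 : m (m u v) (m v u) = u := by
        funext i; by_cases hi : i ∈ U <;> simp [hm, hi]
      have h2 : m (m v u) (m u v) = v := by
        funext i; by_cases hi : i ∈ U <;> simp [hm, hi]
      simp [h1, h2]
    · rintro ⟨x, y⟩ _
      have h1 : m (m x y) (m y x) = x := by
        funext i; by_cases hi : i ∈ U <;> simp [hm, hi]
      have h2 : m (m y x) (m x y) = y := by
        funext i; by_cases hi : i ∈ U <;> simp [hm, hi]
      simp [h1, h2]
  rw [Finset.card_product, Finset.card_product, Finset.card_univ] at key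
  omega

lemma card_zero_on (C : Finset I) (z : α) :
    ((univ : Finset (I → α)).filter fun ω : I → α => ∀ i ∈ C, ω i = z).card
      = (Fintype.card α) ^ (Fintype.card I - C.card) := by
  classical
  have : ((univ : Finset (I → α)).filter fun ω : I → α => ∀ i ∈ C, ω i = z)
      = Fintype.piFinset (fun i => if i ∈ C then ({z} : Finset α) else univ) := by
    ext ω
    simp only [Finset.mem_filter, Finset.mem_univ, true_and, Fintype.mem_piFinset]
    constructor
    · intro h i
      by_cases hi : i ∈ C
      · simp [hi, h i hi]
      · simp [hi]
    · intro h i hi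
      have := h i; simpa [hi] using this
  rw [this, Fintype.card_piFinset]
  have : ∀ i, ((if i ∈ C then ({z} : Finset α) else univ).card) = if i ∈ C then 1 else Fintype.card α := by
    intro i; by_cases hi : i ∈ C <;> simp [hi]
  simp_rw [this]
  rw [Finset.prod_ite, Finset.prod_const_one, Finset.prod_const, one_mul]
  rw [Finset.filter_not, Finset.filter_univ_mem, Finset.card_sdiff_of_subset (Finset.subset_univ C),
    Finset.card_univ]


lemma card_exists_ne (C : Finset I) (z : α) :
    ((univ : Finset (I → α)).filter fun ω : I → α => ∃ i ∈ C, ω i ≠ z).card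
      = (Fintype.card α) ^ (Fintype.card I) - (Fintype.card α) ^ (Fintype.card I - C.card) := by
  classical
  have h := Finset.card_filter_add_card_filter_not
    (s := (univ : Finset (I → α))) (p := fun ω : I → α => ∀ i ∈ C, ω i = z)
  rw [card_zero_on C z] at h
  have hcongr : ((univ : Finset (I → α)).filter fun ω : I → α => ¬ ∀ i ∈ C, ω i = z)
      = ((univ : Finset (I → α)).filter fun ω : I → α => ∃ i ∈ C, ω i ≠ z) := by
    apply Finset.filter_congr; intro ω _; push_neg; rfl
  rw [hcongr] at h
  have hcard : (univ : Finset (I → α)).card = (Fintype.card α) ^ (Fintype.card I) := by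
    rw [Finset.card_univ, Fintype.card_fun]
  rw [hcard] at h
  generalize hx : ((univ : Finset (I → α)).filter fun ω : I → α => ∃ i ∈ C, ω i ≠ z).card = x at h ⊢
  generalize hy : (Fintype.card α) ^ (Fintype.card I - C.card) = y at h ⊢
  generalize hz : (Fintype.card α) ^ (Fintype.card I) = w at h ⊢
  clear * - h
  omega

lemma dependsOn_exists_ne (C : Finset I) (z : α) :
    DependsOnF (fun ω : I → α => ∃ i ∈ C, ω i ≠ z) C := by
  intro ω ω' hag
  constructor
  · rintro ⟨i, hi, hne⟩; exact ⟨i, hi, by rw [← hag i hi]; exact hne⟩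
  · rintro ⟨i, hi, hne⟩; exact ⟨i, hi, by rw [hag i hi]; exact hne⟩

lemma card_inter_exists_ne {ι : Type*} [DecidableEq ι] (D : Finset ι) (C : ι → Finset I) (z : α)
    (hdisj : ∀ l ∈ D, ∀ l' ∈ D, l ≠ l' → Disjoint (C l) (C l')) :
    ((univ : Finset (I → α)).filter fun ω : I → α => ∀ l ∈ D, ∃ i ∈ C l, ω i ≠ z).card
        * (Fintype.card (I → α)) ^ D.card
      = (∏ l ∈ D, ((univ : Finset (I → α)).filter fun ω : I → α => ∃ i ∈ C l, ω i ≠ z).card)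
        * Fintype.card (I → α) := by
  classical
  induction D using Finset.induction_on with
  | empty => simp
  | @insert a D ha ih =>
    have hD : ∀ l ∈ D, ∀ l' ∈ D, l ≠ l' → Disjoint (C l) (C l') := by
      intro l hl l' hl' hne
      exact hdisj l (mem_insert_of_mem hl) l' (mem_insert_of_mem hl') hne
    have hsplit : ((univ : Finset (I → α)).filter fun ω : I → α => ∀ l ∈ insert a D, ∃ i ∈ C l, ω i ≠ z)
        = ((univ : Finset (I → α)).filter fun ω : I → α =>
            (∃ i ∈ C a, ω i ≠ z) ∧ ∀ l ∈ D, ∃ i ∈ C l, ω i ≠ z) := by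
      apply Finset.filter_congr; intro ω _
      simp [Finset.forall_mem_insert]
    have hdep2 : DependsOnF (fun ω : I → α => ∀ l ∈ D, ∃ i ∈ C l, ω i ≠ z) (D.biUnion C) := by
      intro ω ω' hag
      have : ∀ l ∈ D, ((∃ i ∈ C l, ω i ≠ z) ↔ (∃ i ∈ C l, ω' i ≠ z)) := by
        intro l hl
        exact dependsOn_exists_ne (C l) z ω ω' (fun i hi => hag i (Finset.mem_biUnion.mpr ⟨l, hl, hi⟩))
      constructor
      · intro h l hl; exact (this l hl).mp (h l hl)
      · intro h l hl; exact (this l hl).mpr (h l hl)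
    have hdisjUW : Disjoint (C a) (D.biUnion C) := by
      rw [Finset.disjoint_biUnion_right]
      intro l hl
      exact hdisj a (mem_insert_self a D) l (mem_insert_of_mem hl) (by rintro rfl; exact ha hl)
    have hkey := card_filter_and_mul (fun ω : I → α => ∃ i ∈ C a, ω i ≠ z)
      (fun ω : I → α => ∀ l ∈ D, ∃ i ∈ C l, ω i ≠ z) (C a) (D.biUnion C)
      (dependsOn_exists_ne (C a) z) hdep2 hdisjUW
    rw [hsplit, Finset.card_insert_of_notMem ha, Finset.prod_insert ha, pow_succ]
    calc ((univ : Finset (I → α)).filter fun ω : I → α =>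
            (∃ i ∈ C a, ω i ≠ z) ∧ ∀ l ∈ D, ∃ i ∈ C l, ω i ≠ z).card
          * ((Fintype.card (I → α)) ^ D.card * Fintype.card (I → α))
        = (((univ : Finset (I → α)).filter fun ω : I → α =>
            (∃ i ∈ C a, ω i ≠ z) ∧ ∀ l ∈ D, ∃ i ∈ C l, ω i ≠ z).card * Fintype.card (I → α))
          * (Fintype.card (I → α)) ^ D.card := by ring
      _ = (((univ : Finset (I → α)).filter fun ω : I → α => ∃ i ∈ C a, ω i ≠ z).card
          * ((univ : Finset (I → α)).filter fun ω : I → α => ∀ l ∈ D, ∃ i ∈ C l, ω i ≠ z).card)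
          * (Fintype.card (I → α)) ^ D.card := by rw [hkey]
      _ = ((univ : Finset (I → α)).filter fun ω : I → α => ∃ i ∈ C a, ω i ≠ z).card
          * (((univ : Finset (I → α)).filter fun ω : I → α => ∀ l ∈ D, ∃ i ∈ C l, ω i ≠ z).card
          * (Fintype.card (I → α)) ^ D.card) := by ring
      _ = ((univ : Finset (I → α)).filter fun ω : I → α => ∃ i ∈ C a, ω i ≠ z).card
          * ((∏ l ∈ D, ((univ : Finset (I → α)).filter fun ω : I → α => ∃ i ∈ C l, ω i ≠ z).card)
          * Fintype.card (I → α)) := by rw [ih hD]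
      _ = _ := by ring

end Merge

open Classical in
/-- The escape event: every pair of fibers has a nonzero entry. -/
def Esc (n K e₀ : ℕ) [NeZero K] (f g : Fin n → Option (Fin e₀)) (ω : Fin n × Fin n → Fin K) : Prop :=
  ∀ k l : Fin e₀, ∃ a b, f a = some k ∧ g b = some l ∧ ω (a, b) ≠ 0

set_option maxHeartbeats 1000000 in
lemma exists_good_omega (n K e₀ m₁ s₀ : ℕ) [NeZero K] (hK : 2 ≤ K) (he₀ : 1 ≤ e₀) (hm₁ : m₁ ≤ n * n)
    (Hdeg : (2 * n * (n.choose m₁) : ℝ) * ((K : ℝ) ^ m₁)⁻¹ ≤ 1 / 4)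
    (Hfam : ((e₀ + 1 : ℝ)) ^ (2 * n)
        * (1 - ((K : ℝ)⁻¹) ^ (s₀ * s₀)) ^ ((e₀ - n / (s₀ + 1)) * (e₀ - n / (s₀ + 1))) ≤ 1 / 4) :
    ∃ ω : Fin n × Fin n → Fin K,
      (∀ a : Fin n, ((univ.filter fun b => ω (a, b) = 0).card) < m₁) ∧
      (∀ b : Fin n, ((univ.filter fun a => ω (a, b) = 0).card) < m₁) ∧
      (∀ f g : Fin n → Option (Fin e₀),
        (∀ k, ∃ a, f a = some k) → (∀ k, ∃ b, g b = some k) →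
        ∃ k l, ∀ a b, f a = some k → g b = some l → ω (a, b) = 0) := by
  classical
  set γ₀ : ℕ := e₀ - n / (s₀ + 1) with hγ₀
  set q : ℝ := ((K : ℝ)⁻¹) ^ (s₀ * s₀) with hq
  have hK0 : (0 : ℝ) < (K : ℝ) := by positivity
  have hKinv1 : ((K : ℝ))⁻¹ ≤ 1 := by
    rw [inv_le_one_iff₀]; right; exact_mod_cast le_trans (by norm_num) hK
  have hq0 : 0 ≤ q := by positivity
  have hq1 : q ≤ 1 := pow_le_one₀ (by positivity) hKinv1
  have hNI : Fintype.card (Fin n × Fin n) = n * n := by simp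
  have hNA : Fintype.card (Fin K) = K := by simp
  set NN : ℕ := K ^ (n * n) with hNN
  have hNf : Fintype.card (Fin n × Fin n → Fin K) = NN := by
    rw [Fintype.card_fun, hNI, hNA]
  have hNN0 : (0 : ℝ) < (NN : ℝ) := by
    have : 0 < NN := Nat.pow_pos (by omega)
    exact_mod_cast this
  -- the good property
  set Goal : (Fin n × Fin n → Fin K) → Prop := fun ω =>
      (∀ a : Fin n, ((univ.filter fun b => ω (a, b) = 0).card) < m₁) ∧
      (∀ b : Fin n, ((univ.filter fun a => ω (a, b) = 0).card) < m₁) ∧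
      (∀ f g : Fin n → Option (Fin e₀),
        (∀ k, ∃ a, f a = some k) → (∀ k, ∃ b, g b = some k) →
        ∃ k l, ∀ a b, f a = some k → g b = some l → ω (a, b) = 0) with hGoal
  set Bad : Finset (Fin n × Fin n → Fin K) := univ.filter (fun ω => ¬ Goal ω) with hBad
  -- row bad sets
  set U1 : Finset (Fin n × Fin n → Fin K) :=
    ((univ : Finset (Fin n)) ×ˢ Finset.powersetCard m₁ (univ : Finset (Fin n))).biUnion
      (fun p => univ.filter fun ω : Fin n × Fin n → Fin K => ∀ b ∈ p.2, ω (p.1, b) = 0) with hU1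
  set U2 : Finset (Fin n × Fin n → Fin K) :=
    ((univ : Finset (Fin n)) ×ˢ Finset.powersetCard m₁ (univ : Finset (Fin n))).biUnion
      (fun p => univ.filter fun ω : Fin n × Fin n → Fin K => ∀ a ∈ p.2, ω (a, p.1) = 0) with hU2
  set U3 : Finset (Fin n × Fin n → Fin K) :=
    (univ : Finset ((Fin n → Option (Fin e₀)) × (Fin n → Option (Fin e₀)))).biUnion
      (fun p => univ.filter (Esc n K e₀ p.1 p.2)) with hU3
  have hsubset : Bad ⊆ U1 ∪ U2 ∪ U3 := by
    intro ω hω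
    rw [hBad, Finset.mem_filter] at hω
    have hbad : ¬ ((∀ a : Fin n, ((univ.filter fun b => ω (a, b) = 0).card) < m₁) ∧
      (∀ b : Fin n, ((univ.filter fun a => ω (a, b) = 0).card) < m₁) ∧
      (∀ f g : Fin n → Option (Fin e₀),
        (∀ k, ∃ a, f a = some k) → (∀ k, ∃ b, g b = some k) →
        ∃ k l, ∀ a b, f a = some k → g b = some l → ω (a, b) = 0)) := hω.2
    push_neg at hbad
    by_cases h1 : ∀ a : Fin n, ((univ.filter fun b => ω (a, b) = 0).card) < m₁
    · by_cases h2 : ∀ b : Fin n, ((univ.filter fun a => ω (a, b) = 0).card) < m₁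
      · -- escape case
        obtain ⟨f, g, hf, hg, hesc⟩ := hbad h1 h2
        refine Finset.mem_union_right _ (Finset.mem_biUnion.mpr ⟨(f, g), mem_univ _, ?_⟩)
        rw [Finset.mem_filter]
        refine ⟨mem_univ _, ?_⟩
        intro k l
        obtain ⟨a, b, hab⟩ := hesc k l
        exact ⟨a, b, hab.1, hab.2.1, hab.2.2⟩
      · push_neg at h2
        obtain ⟨b, hb⟩ := h2
        obtain ⟨T, hT, hTcard⟩ := Finset.exists_subset_card_eq hb
        refine Finset.mem_union_left _ (Finset.mem_union_right _ ?_)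
        refine Finset.mem_biUnion.mpr ⟨(b, T), ?_, ?_⟩
        · rw [Finset.mem_product]
          exact ⟨mem_univ _, Finset.mem_powersetCard.mpr ⟨Finset.subset_univ _, hTcard⟩⟩
        · rw [Finset.mem_filter]
          exact ⟨mem_univ _, fun a ha => (Finset.mem_filter.mp (hT ha)).2⟩
    · push_neg at h1
      obtain ⟨a, ha⟩ := h1
      obtain ⟨T, hT, hTcard⟩ := Finset.exists_subset_card_eq ha
      refine Finset.mem_union_left _ (Finset.mem_union_left _ ?_)
      refine Finset.mem_biUnion.mpr ⟨(a, T), ?_, ?_⟩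
      · rw [Finset.mem_product]
        exact ⟨mem_univ _, Finset.mem_powersetCard.mpr ⟨Finset.subset_univ _, hTcard⟩⟩
      · rw [Finset.mem_filter]
        exact ⟨mem_univ _, fun b hb => (Finset.mem_filter.mp (hT hb)).2⟩
  -- cardinality of U1
  have hU1card : U1.card ≤ n * n.choose m₁ * K ^ (n * n - m₁) := by
    refine le_trans (Finset.card_biUnion_le) ?_
    have : ∀ p ∈ ((univ : Finset (Fin n)) ×ˢ Finset.powersetCard m₁ (univ : Finset (Fin n))),
        (univ.filter fun ω : Fin n × Fin n → Fin K => ∀ b ∈ p.2, ω (p.1, b) = 0).card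
          = K ^ (n * n - m₁) := by
      rintro ⟨a, T⟩ hp
      rw [Finset.mem_product, Finset.mem_powersetCard] at hp
      have hfil : (univ.filter fun ω : Fin n × Fin n → Fin K => ∀ b ∈ T, ω (a, b) = 0)
          = (univ.filter fun ω : Fin n × Fin n → Fin K =>
              ∀ i ∈ T.map ⟨fun b => (a, b), fun x y h => by simpa using h⟩, ω i = 0) := by
        apply Finset.filter_congr
        intro ω _
        constructor
        · intro h i hi
          obtain ⟨b, hb, rfl⟩ := Finset.mem_map.mp hi
          exact h b hb
        · intro h b hb
          exact h (a, b) (Finset.mem_map.mpr ⟨b, hb, rfl⟩)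
      rw [hfil, card_zero_on, hNI, hNA, Finset.card_map, hp.2.2]
    rw [Finset.sum_congr rfl this, Finset.sum_const, Finset.card_product, Finset.card_univ,
      Finset.card_powersetCard, Finset.card_univ, Fintype.card_fin, smul_eq_mul]
  have hU2card : U2.card ≤ n * n.choose m₁ * K ^ (n * n - m₁) := by
    refine le_trans (Finset.card_biUnion_le) ?_
    have : ∀ p ∈ ((univ : Finset (Fin n)) ×ˢ Finset.powersetCard m₁ (univ : Finset (Fin n))),
        (univ.filter fun ω : Fin n × Fin n → Fin K => ∀ a ∈ p.2, ω (a, p.1) = 0).card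
          = K ^ (n * n - m₁) := by
      rintro ⟨b, T⟩ hp
      rw [Finset.mem_product, Finset.mem_powersetCard] at hp
      have hfil : (univ.filter fun ω : Fin n × Fin n → Fin K => ∀ a ∈ T, ω (a, b) = 0)
          = (univ.filter fun ω : Fin n × Fin n → Fin K =>
              ∀ i ∈ T.map ⟨fun a => (a, b), fun x y h => by simpa using h⟩, ω i = 0) := by
        apply Finset.filter_congr
        intro ω _
        constructor
        · intro h i hi
          obtain ⟨a, ha, rfl⟩ := Finset.mem_map.mp hi
          exact h a ha
        · intro h a ha
          exact h (a, b) (Finset.mem_map.mpr ⟨a, ha, rfl⟩)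
      rw [hfil, card_zero_on, hNI, hNA, Finset.card_map, hp.2.2]
    rw [Finset.sum_congr rfl this, Finset.sum_const, Finset.card_product, Finset.card_univ,
      Finset.card_powersetCard, Finset.card_univ, Fintype.card_fin, smul_eq_mul]
  -- per family bound
  have h1q0 : (0:ℝ) ≤ 1 - q := by linarith
  have h1q1 : (1:ℝ) - q ≤ 1 := by linarith
  have hEscBound : ∀ f g : Fin n → Option (Fin e₀),
      (((univ.filter (Esc n K e₀ f g)).card : ℝ)) ≤ (NN : ℝ) * (1 - q) ^ (γ₀ * γ₀) := by
    intro f g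
    by_cases hval : (∀ k, ∃ a, f a = some k) ∧ (∀ k, ∃ b, g b = some k)
    swap
    · have hemp : (univ.filter (Esc n K e₀ f g)) = ∅ := by
        rw [Finset.filter_eq_empty_iff]
        intro ω _
        intro hesc
        apply hval
        constructor
        · intro k
          obtain ⟨a, b, ha, -, -⟩ := hesc k ⟨0, he₀⟩
          exact ⟨a, ha⟩
        · intro k
          obtain ⟨a, b, -, hb, -⟩ := hesc ⟨0, he₀⟩ k
          exact ⟨b, hb⟩
      rw [hemp]
      simp only [Finset.card_empty, Nat.cast_zero]
      positivity
    obtain ⟨hf, hg⟩ := hval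
    set Tf : Fin e₀ → Finset (Fin n) := fun k => univ.filter (fun a => f a = some k) with hTf
    set Tg : Fin e₀ → Finset (Fin n) := fun k => univ.filter (fun b => g b = some k) with hTg
    have hTfd : ∀ k ∈ (univ : Finset (Fin e₀)), ∀ k' ∈ (univ : Finset (Fin e₀)), k ≠ k' →
        Disjoint (Tf k) (Tf k') := by
      intro k _ k' _ hkk'
      rw [Finset.disjoint_left]
      intro a ha ha'
      rw [hTf] at ha ha'
      simp only [Finset.mem_filter] at ha ha'
      rw [ha.2] at ha'
      exact hkk' (by simpa using ha'.2)
    have hTgd : ∀ k ∈ (univ : Finset (Fin e₀)), ∀ k' ∈ (univ : Finset (Fin e₀)), k ≠ k' →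
        Disjoint (Tg k) (Tg k') := by
      intro k _ k' _ hkk'
      rw [Finset.disjoint_left]
      intro b hb hb'
      rw [hTg] at hb hb'
      simp only [Finset.mem_filter] at hb hb'
      rw [hb.2] at hb'
      exact hkk' (by simpa using hb'.2)
    -- small fibers
    have hsmall : ∀ (T : Fin e₀ → Finset (Fin n)),
        (∀ k ∈ (univ : Finset (Fin e₀)), ∀ k' ∈ (univ : Finset (Fin e₀)), k ≠ k' →
          Disjoint (T k) (T k')) →
        γ₀ ≤ (univ.filter fun k => (T k).card ≤ s₀).card := by
      intro T hTd
      set sm := univ.filter fun k => (T k).card ≤ s₀ with hsm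
      have hbig : ((univ : Finset (Fin e₀)) \ sm).card * (s₀ + 1) ≤ n := by
        calc ((univ : Finset (Fin e₀)) \ sm).card * (s₀ + 1)
            = ((univ : Finset (Fin e₀)) \ sm).card • (s₀ + 1) := by rw [smul_eq_mul]
          _ ≤ ∑ k ∈ (univ : Finset (Fin e₀)) \ sm, (T k).card := by
              apply Finset.card_nsmul_le_sum
              intro k hk
              rw [Finset.mem_sdiff, hsm] at hk
              have := hk.2
              simp only [Finset.mem_filter, Finset.mem_univ, true_and, not_le] at this
              omega
          _ = (((univ : Finset (Fin e₀)) \ sm).biUnion T).card := by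
              rw [Finset.card_biUnion]
              intro k hk k' hk' hkk'
              exact hTd k (mem_univ _) k' (mem_univ _) hkk'
          _ ≤ (univ : Finset (Fin n)).card := Finset.card_le_card (Finset.subset_univ _)
          _ = n := by rw [Finset.card_univ, Fintype.card_fin]
      have hdiv : ((univ : Finset (Fin e₀)) \ sm).card ≤ n / (s₀ + 1) :=
        (Nat.le_div_iff_mul_le (by omega)).mpr hbig
      have hsplit : ((univ : Finset (Fin e₀)) \ sm).card = e₀ - sm.card := by
        rw [Finset.card_sdiff_of_subset (Finset.subset_univ _), Finset.card_univ, Fintype.card_fin]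
      have hsmle : sm.card ≤ e₀ := by
        have := Finset.card_le_card (Finset.subset_univ sm)
        rwa [Finset.card_univ, Fintype.card_fin] at this
      rw [hγ₀]
      omega
    have hsmallf := hsmall Tf hTfd
    have hsmallg := hsmall Tg hTgd
    set smf := univ.filter fun k => (Tf k).card ≤ s₀ with hsmf
    set smg := univ.filter fun k => (Tg k).card ≤ s₀ with hsmg
    set Γ : Finset (Fin e₀ × Fin e₀) := smf ×ˢ smg with hΓ
    set C : Fin e₀ × Fin e₀ → Finset (Fin n × Fin n) := fun p => (Tf p.1) ×ˢ (Tg p.2) with hC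
    have hCdisj : ∀ p ∈ Γ, ∀ p' ∈ Γ, p ≠ p' → Disjoint (C p) (C p') := by
      intro p _ p' _ hpp'
      rw [Finset.disjoint_left]
      rintro ⟨a, b⟩ h1 h2
      rw [hC, Finset.mem_product] at h1 h2
      have e1 : f a = some p.1 := by
        have := h1.1; rw [hTf] at this; exact (Finset.mem_filter.mp this).2
      have e2 : f a = some p'.1 := by
        have := h2.1; rw [hTf] at this; exact (Finset.mem_filter.mp this).2
      have e3 : g b = some p.2 := by
        have := h1.2; rw [hTg] at this; exact (Finset.mem_filter.mp this).2
      have e4 : g b = some p'.2 := by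
        have := h2.2; rw [hTg] at this; exact (Finset.mem_filter.mp this).2
      apply hpp'
      rw [e1] at e2
      rw [e3] at e4
      exact Prod.ext (by simpa using e2) (by simpa using e4)
    have hsub : (univ.filter (Esc n K e₀ f g)) ⊆
        (univ.filter fun ω : Fin n × Fin n → Fin K => ∀ p ∈ Γ, ∃ i ∈ C p, ω i ≠ 0) := by
      intro ω hω
      rw [Finset.mem_filter] at hω ⊢
      refine ⟨mem_univ _, ?_⟩
      intro p _
      obtain ⟨a, b, ha, hb, hne⟩ := hω.2 p.1 p.2
      refine ⟨(a, b), ?_, hne⟩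
      rw [hC, Finset.mem_product, hTf, hTg]
      exact ⟨Finset.mem_filter.mpr ⟨mem_univ _, ha⟩, Finset.mem_filter.mpr ⟨mem_univ _, hb⟩⟩
    have hkey := card_inter_exists_ne Γ C (0 : Fin K) hCdisj
    rw [hNf] at hkey
    -- bound each factor
    have hEp : ∀ p ∈ Γ, (((univ : Finset (Fin n × Fin n → Fin K)).filter
        fun ω => ∃ i ∈ C p, ω i ≠ (0 : Fin K)).card : ℝ) ≤ (NN : ℝ) * (1 - q) := by
      intro p hp
      rw [card_exists_ne, hNI, hNA]
      have hc2 : (C p).card ≤ n * n := by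
        have := Finset.card_le_card (Finset.subset_univ (C p))
        rwa [Finset.card_univ, hNI] at this
      have hc1 : (C p).card ≤ s₀ * s₀ := by
        rw [hΓ, Finset.mem_product] at hp
        have hf1 : (Tf p.1).card ≤ s₀ := by
          have := hp.1; rw [hsmf] at this
          exact (Finset.mem_filter.mp this).2
        have hg1 : (Tg p.2).card ≤ s₀ := by
          have := hp.2; rw [hsmg] at this
          exact (Finset.mem_filter.mp this).2
        rw [hC, Finset.card_product]
        exact Nat.mul_le_mul hf1 hg1
      have hmono : K ^ (n * n - (C p).card) ≤ K ^ (n * n) :=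
        Nat.pow_le_pow_right (le_trans (by norm_num) hK) (Nat.sub_le _ _)
      rw [Nat.cast_sub hmono]
      push_cast
      have e1 : ((K : ℝ)) ^ (n * n - (C p).card) = (NN : ℝ) * (((K : ℝ))⁻¹) ^ ((C p).card) := by
        rw [inv_pow, eq_mul_inv_iff_mul_eq₀ (by positivity), ← pow_add,
          Nat.sub_add_cancel hc2, hNN]
        push_cast
        ring
      have e2 : ((K : ℝ)) ^ (n * n) = (NN : ℝ) := by rw [hNN]; push_cast; ring
      rw [e1, e2]
      have hqle : q ≤ (((K : ℝ))⁻¹) ^ ((C p).card) :=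
        pow_le_pow_of_le_one (by positivity) hKinv1 hc1
      nlinarith [hNN0, hqle]
    -- combine
    have hXle : (((univ : Finset (Fin n × Fin n → Fin K)).filter
        fun ω => ∀ p ∈ Γ, ∃ i ∈ C p, ω i ≠ (0 : Fin K)).card : ℝ) ≤ (NN : ℝ) * (1 - q) ^ Γ.card := by
      have hcast : (((univ : Finset (Fin n × Fin n → Fin K)).filter
          fun ω => ∀ p ∈ Γ, ∃ i ∈ C p, ω i ≠ (0 : Fin K)).card : ℝ) * ((NN : ℝ)) ^ Γ.card
          = (∏ p ∈ Γ, (((univ : Finset (Fin n × Fin n → Fin K)).filter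
            fun ω => ∃ i ∈ C p, ω i ≠ (0 : Fin K)).card : ℝ)) * (NN : ℝ) := by
        exact_mod_cast congrArg (Nat.cast : ℕ → ℝ) hkey
      have hprodle : (∏ p ∈ Γ, (((univ : Finset (Fin n × Fin n → Fin K)).filter
          fun ω => ∃ i ∈ C p, ω i ≠ (0 : Fin K)).card : ℝ)) ≤ ((NN : ℝ) * (1 - q)) ^ Γ.card := by
        rw [← Finset.prod_const]
        apply Finset.prod_le_prod
        · intro p _; positivity
        · exact hEp
      have hNpow : (0 : ℝ) < ((NN : ℝ)) ^ Γ.card := by positivity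
      rw [← mul_le_mul_iff_of_pos_right hNpow]
      calc (((univ : Finset (Fin n × Fin n → Fin K)).filter
            fun ω => ∀ p ∈ Γ, ∃ i ∈ C p, ω i ≠ (0 : Fin K)).card : ℝ) * ((NN : ℝ)) ^ Γ.card
          = (∏ p ∈ Γ, (((univ : Finset (Fin n × Fin n → Fin K)).filter
            fun ω => ∃ i ∈ C p, ω i ≠ (0 : Fin K)).card : ℝ)) * (NN : ℝ) := hcast
        _ ≤ ((NN : ℝ) * (1 - q)) ^ Γ.card * (NN : ℝ) := by
            apply mul_le_mul_of_nonneg_right hprodle (le_of_lt hNN0)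
        _ = (NN : ℝ) * (1 - q) ^ Γ.card * ((NN : ℝ)) ^ Γ.card := by
            rw [mul_pow]; ring
    have hΓcard : γ₀ * γ₀ ≤ Γ.card := by
      rw [hΓ, Finset.card_product]
      exact Nat.mul_le_mul hsmallf hsmallg
    have hfinalpow : (1 - q) ^ Γ.card ≤ (1 - q) ^ (γ₀ * γ₀) :=
      pow_le_pow_of_le_one h1q0 h1q1 hΓcard
    have hsubcard : (((univ.filter (Esc n K e₀ f g)).card : ℝ))
        ≤ (((univ : Finset (Fin n × Fin n → Fin K)).filter
          fun ω => ∀ p ∈ Γ, ∃ i ∈ C p, ω i ≠ (0 : Fin K)).card : ℝ) := by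
      exact_mod_cast Nat.cast_le.mpr (Finset.card_le_card hsub)
    calc (((univ.filter (Esc n K e₀ f g)).card : ℝ))
        ≤ (((univ : Finset (Fin n × Fin n → Fin K)).filter
          fun ω => ∀ p ∈ Γ, ∃ i ∈ C p, ω i ≠ (0 : Fin K)).card : ℝ) := hsubcard
      _ ≤ (NN : ℝ) * (1 - q) ^ Γ.card := hXle
      _ ≤ (NN : ℝ) * (1 - q) ^ (γ₀ * γ₀) := by
          apply mul_le_mul_of_nonneg_left hfinalpow (le_of_lt hNN0)
  have hU3card : ((U3.card : ℝ)) ≤ ((e₀ + 1 : ℝ)) ^ (2 * n) * ((NN : ℝ) * (1 - q) ^ (γ₀ * γ₀)) := by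
    have h1 : (U3.card : ℝ) ≤ ∑ p ∈ (univ : Finset ((Fin n → Option (Fin e₀)) × (Fin n → Option (Fin e₀)))),
        ((univ.filter (Esc n K e₀ p.1 p.2)).card : ℝ) := by
      rw [hU3]
      exact_mod_cast Nat.cast_le.mpr Finset.card_biUnion_le
    refine le_trans h1 ?_
    refine le_trans (Finset.sum_le_sum (fun p _ => hEscBound p.1 p.2)) ?_
    rw [Finset.sum_const, Finset.card_univ, nsmul_eq_mul]
    have hcard : (Fintype.card ((Fin n → Option (Fin e₀)) × (Fin n → Option (Fin e₀))) : ℝ)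
        = ((e₀ + 1 : ℝ)) ^ (2 * n) := by
      rw [Fintype.card_prod, Fintype.card_fun, Fintype.card_option, Fintype.card_fin, Fintype.card_fin]
      push_cast
      rw [two_mul, pow_add]
    rw [hcard]
  -- final count
  have hBadlt : Bad.card < NN := by
    have hUbound : ((U1 ∪ U2 ∪ U3).card : ℝ) < (NN : ℝ) := by
      have hle : ((U1 ∪ U2 ∪ U3).card : ℝ) ≤ (U1.card : ℝ) + (U2.card : ℝ) + (U3.card : ℝ) := by
        have h1 := Finset.card_union_le (U1 ∪ U2) U3
        have h2 := Finset.card_union_le U1 U2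
        have h3 : (U1 ∪ U2 ∪ U3).card ≤ U1.card + U2.card + U3.card := by omega
        exact_mod_cast Nat.cast_le.mpr h3
      have hpow : ((K : ℝ)) ^ (n * n - m₁) = (NN : ℝ) * ((K : ℝ) ^ m₁)⁻¹ := by
        have h0 : (K : ℝ) ^ (n * n - m₁) * (K : ℝ) ^ m₁ = (NN : ℝ) := by
          rw [← pow_add, Nat.sub_add_cancel hm₁, hNN]
          push_cast
          ring
        rw [eq_mul_inv_iff_mul_eq₀ (by positivity)]
        exact h0
      have hU12 : (U1.card : ℝ) + (U2.card : ℝ) ≤ (NN : ℝ) * (1/4) := by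
        have c1 : (U1.card : ℝ) ≤ (n * n.choose m₁ : ℝ) * ((K : ℝ)) ^ (n * n - m₁) := by
          exact_mod_cast Nat.cast_le.mpr hU1card
        have c2 : (U2.card : ℝ) ≤ (n * n.choose m₁ : ℝ) * ((K : ℝ)) ^ (n * n - m₁) := by
          exact_mod_cast Nat.cast_le.mpr hU2card
        have : (U1.card : ℝ) + (U2.card : ℝ) ≤ (2 * n * (n.choose m₁) : ℝ) * ((K : ℝ)) ^ (n * n - m₁) := by
          push_cast at c1 c2 ⊢
          linarith
        rw [hpow] at this
        calc (U1.card : ℝ) + (U2.card : ℝ)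
            ≤ (2 * n * (n.choose m₁) : ℝ) * ((NN : ℝ) * ((K : ℝ) ^ m₁)⁻¹) := this
          _ = (NN : ℝ) * ((2 * n * (n.choose m₁) : ℝ) * ((K : ℝ) ^ m₁)⁻¹) := by ring
          _ ≤ (NN : ℝ) * (1/4) := by
              exact mul_le_mul_of_nonneg_left Hdeg (le_of_lt hNN0)
      have hU3' : (U3.card : ℝ) ≤ (NN : ℝ) * (1/4) := by
        refine le_trans hU3card ?_
        calc ((e₀ + 1 : ℝ)) ^ (2 * n) * ((NN : ℝ) * (1 - q) ^ (γ₀ * γ₀))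
            = (NN : ℝ) * (((e₀ + 1 : ℝ)) ^ (2 * n) * (1 - q) ^ (γ₀ * γ₀)) := by ring
          _ ≤ (NN : ℝ) * (1/4) := mul_le_mul_of_nonneg_left Hfam (le_of_lt hNN0)
      calc ((U1 ∪ U2 ∪ U3).card : ℝ) ≤ (U1.card : ℝ) + (U2.card : ℝ) + (U3.card : ℝ) := hle
        _ ≤ (NN : ℝ) * (1/4) + (NN : ℝ) * (1/4) + (NN : ℝ) * (1/4) := by linarith
        _ < (NN : ℝ) := by linarith
    have := Finset.card_le_card hsubset
    have hlt : ((Bad.card : ℝ)) < (NN : ℝ) := lt_of_le_of_lt (by exact_mod_cast Nat.cast_le.mpr this) hUbound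
    exact_mod_cast hlt
  have hnotall : ¬ ((univ : Finset (Fin n × Fin n → Fin K)) ⊆ Bad) := by
    intro hsub
    have := Finset.card_le_card hsub
    rw [Finset.card_univ, hNf] at this
    omega
  obtain ⟨ω, hωuniv, hωgood⟩ := Finset.not_subset.mp hnotall
  refine ⟨ω, ?_⟩
  have : Goal ω := by
    by_contra hcon
    exact hωgood (by rw [hBad, Finset.mem_filter]; exact ⟨mem_univ _, hcon⟩)
  exact this

def myGraph (n K : ℕ) [NeZero K] (ω : Fin n × Fin n → Fin K) : SimpleGraph (Fin n ⊕ Fin n) where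
  Adj v w := match v, w with
    | Sum.inl a, Sum.inl a' => a ≠ a'
    | Sum.inl a, Sum.inr b => ω (a, b) ≠ 0
    | Sum.inr b, Sum.inl a => ω (a, b) ≠ 0
    | Sum.inr b, Sum.inr b' => b ≠ b'
  symm := by
    constructor
    rintro (a | b) (a' | b') h
    · exact Ne.symm h
    · exact h
    · exact h
    · exact Ne.symm h
  loopless := by constructor; rintro (a | b) h <;> exact h rfl

@[simp] lemma myGraph_adj_ll {n K : ℕ} [NeZero K] {ω : Fin n × Fin n → Fin K} {a a' : Fin n} :
    (myGraph n K ω).Adj (Sum.inl a) (Sum.inl a') ↔ a ≠ a' := Iff.rfl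
@[simp] lemma myGraph_adj_lr {n K : ℕ} [NeZero K] {ω : Fin n × Fin n → Fin K} {a b : Fin n} :
    (myGraph n K ω).Adj (Sum.inl a) (Sum.inr b) ↔ ω (a, b) ≠ 0 := Iff.rfl
@[simp] lemma myGraph_adj_rl {n K : ℕ} [NeZero K] {ω : Fin n × Fin n → Fin K} {a b : Fin n} :
    (myGraph n K ω).Adj (Sum.inr b) (Sum.inl a) ↔ ω (a, b) ≠ 0 := Iff.rfl
@[simp] lemma myGraph_adj_rr {n K : ℕ} [NeZero K] {ω : Fin n × Fin n → Fin K} {b b' : Fin n} :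
    (myGraph n K ω).Adj (Sum.inr b) (Sum.inr b') ↔ b ≠ b' := Iff.rfl

lemma no_minor (n K e₀ : ℕ) [NeZero K] (hn : 0 < n) (he₀ : 1 ≤ e₀)
    (ω : Fin n × Fin n → Fin K)
    (hb : ∀ f g : Fin n → Option (Fin e₀),
      (∀ k, ∃ a, f a = some k) → (∀ k, ∃ b, g b = some k) →
      ∃ k l, ∀ a b, f a = some k → g b = some l → ω (a, b) = 0)
    (t : ℕ) (ht : n + e₀ ≤ t) : ¬ (myGraph n K ω).HasKMinor t := by
  rintro ⟨Z, hne, hdisj, hconn, hadj⟩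
  classical
  have hdisj' : ∀ {i j : Fin t}, i ≠ j → ∀ {v : Fin n ⊕ Fin n}, v ∈ Z i → v ∈ Z j → False := by
    intro i j hij v hvi hvj
    exact Set.disjoint_left.mp (hdisj hij) hvi hvj
  set tA : Finset (Fin t) := univ.filter (fun i => ∃ a : Fin n, Sum.inl a ∈ Z i) with htA
  set tB : Finset (Fin t) := univ.filter (fun i => ∃ b : Fin n, Sum.inr b ∈ Z i) with htB
  -- counting: at most n sets touch the left side
  have htouch : ∀ (tS : Finset (Fin t)) (emb : Fin n → Fin n ⊕ Fin n),
      Function.Injective emb →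
      (∀ i ∈ tS, ∃ a : Fin n, emb a ∈ Z i) → tS.card ≤ n := by
    intro tS emb hembinj hmem
    have : tS.card ≤ (univ : Finset (Fin n)).card := by
      apply Finset.card_le_card_of_injOn
        (fun i => if h : ∃ a : Fin n, emb a ∈ Z i then h.choose else ⟨0, hn⟩)
      · intro i _; exact mem_univ _
      · intro i hi j hj hEq
        by_contra hij
        have hi' := hmem i hi
        have hj' := hmem j hj
        have hEq' : (if h : ∃ a : Fin n, emb a ∈ Z i then h.choose else ⟨0, hn⟩)
            = (if h : ∃ a : Fin n, emb a ∈ Z j then h.choose else ⟨0, hn⟩) := hEq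
        rw [dif_pos hi', dif_pos hj'] at hEq'
        exact hdisj' hij (hEq' ▸ hi'.choose_spec) hj'.choose_spec
    rwa [Finset.card_univ, Fintype.card_fin] at this
  have htAcard : tA.card ≤ n := by
    apply htouch tA Sum.inl (fun x y h => by simpa using h)
    intro i hi
    rw [htA, Finset.mem_filter] at hi
    exact hi.2
  have htBcard : tB.card ≤ n := by
    apply htouch tB Sum.inr (fun x y h => by simpa using h)
    intro i hi
    rw [htB, Finset.mem_filter] at hi
    exact hi.2
  -- pure sets
  have hpureB : e₀ ≤ ((univ : Finset (Fin t)) \ tA).card := by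
    rw [Finset.card_sdiff_of_subset (Finset.subset_univ _), Finset.card_univ, Fintype.card_fin]
    omega
  have hpureA : e₀ ≤ ((univ : Finset (Fin t)) \ tB).card := by
    rw [Finset.card_sdiff_of_subset (Finset.subset_univ _), Finset.card_univ, Fintype.card_fin]
    omega
  obtain ⟨SA, hSAsub, hSAcard⟩ := Finset.exists_subset_card_eq hpureA
  obtain ⟨SB, hSBsub, hSBcard⟩ := Finset.exists_subset_card_eq hpureB
  set iA : Fin e₀ → Fin t := fun k => SA.orderEmbOfFin hSAcard k with hiA
  set iB : Fin e₀ → Fin t := fun k => SB.orderEmbOfFin hSBcard k with hiB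
  have hiAinj : Function.Injective iA := (SA.orderEmbOfFin hSAcard).injective
  have hiBinj : Function.Injective iB := (SB.orderEmbOfFin hSBcard).injective
  have hiAmem : ∀ k, iA k ∈ SA := fun k => Finset.orderEmbOfFin_mem SA hSAcard k
  have hiBmem : ∀ k, iB k ∈ SB := fun k => Finset.orderEmbOfFin_mem SB hSBcard k
  -- members of Z (iA k) are all inl
  have hZA : ∀ k, ∀ v ∈ Z (iA k), ∃ a : Fin n, v = Sum.inl a := by
    intro k v hv
    rcases v with a | b
    · exact ⟨a, rfl⟩
    · exfalso
      have : iA k ∈ tB := by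
        rw [htB, Finset.mem_filter]
        exact ⟨mem_univ _, ⟨b, hv⟩⟩
      have := hSAsub (hiAmem k)
      rw [Finset.mem_sdiff] at this
      exact this.2 ‹iA k ∈ tB›
  have hZB : ∀ k, ∀ v ∈ Z (iB k), ∃ b : Fin n, v = Sum.inr b := by
    intro k v hv
    rcases v with a | b
    · exfalso
      have : iB k ∈ tA := by
        rw [htA, Finset.mem_filter]
        exact ⟨mem_univ _, ⟨a, hv⟩⟩
      have := hSBsub (hiBmem k)
      rw [Finset.mem_sdiff] at this
      exact this.2 ‹iB k ∈ tA›
    · exact ⟨b, rfl⟩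
  -- fiber maps
  set f : Fin n → Option (Fin e₀) :=
    fun a => if h : ∃ k, Sum.inl a ∈ Z (iA k) then some h.choose else none with hf
  set g : Fin n → Option (Fin e₀) :=
    fun b => if h : ∃ k, Sum.inr b ∈ Z (iB k) then some h.choose else none with hg
  have hfuniq : ∀ a k, Sum.inl a ∈ Z (iA k) → f a = some k := by
    intro a k hmem
    have hex : ∃ k', Sum.inl a ∈ Z (iA k') := ⟨k, hmem⟩
    show (if h : ∃ k', Sum.inl a ∈ Z (iA k') then some h.choose else none) = some k
    rw [dif_pos hex]
    congr 1
    by_contra hne'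
    exact hdisj' (fun h => hne' (hiAinj h)) hex.choose_spec hmem
  have hguniq : ∀ b k, Sum.inr b ∈ Z (iB k) → g b = some k := by
    intro b k hmem
    have hex : ∃ k', Sum.inr b ∈ Z (iB k') := ⟨k, hmem⟩
    show (if h : ∃ k', Sum.inr b ∈ Z (iB k') then some h.choose else none) = some k
    rw [dif_pos hex]
    congr 1
    by_contra hne'
    exact hdisj' (fun h => hne' (hiBinj h)) hex.choose_spec hmem
  have hfmem : ∀ a k, f a = some k → Sum.inl a ∈ Z (iA k) := by
    intro a k hak
    have hak' : (if h : ∃ k', Sum.inl a ∈ Z (iA k') then some h.choose else none) = some k := hak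
    by_cases hex : ∃ k', Sum.inl a ∈ Z (iA k')
    · rw [dif_pos hex] at hak'
      have := hex.choose_spec
      rwa [Option.some_inj.mp hak'] at this
    · rw [dif_neg hex] at hak'; exact absurd hak' (by simp)
  have hgmem : ∀ b k, g b = some k → Sum.inr b ∈ Z (iB k) := by
    intro b k hbk
    have hbk' : (if h : ∃ k', Sum.inr b ∈ Z (iB k') then some h.choose else none) = some k := hbk
    by_cases hex : ∃ k', Sum.inr b ∈ Z (iB k')
    · rw [dif_pos hex] at hbk'
      have := hex.choose_spec
      rwa [Option.some_inj.mp hbk'] at this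
    · rw [dif_neg hex] at hbk'; exact absurd hbk' (by simp)
  have hfval : ∀ k, ∃ a, f a = some k := by
    intro k
    obtain ⟨v, hv⟩ := hne (iA k)
    obtain ⟨a, rfl⟩ := hZA k v hv
    exact ⟨a, hfuniq a k hv⟩
  have hgval : ∀ k, ∃ b, g b = some k := by
    intro k
    obtain ⟨v, hv⟩ := hne (iB k)
    obtain ⟨b, rfl⟩ := hZB k v hv
    exact ⟨b, hguniq b k hv⟩
  obtain ⟨k, l, hz⟩ := hb f g hfval hgval
  -- the two branch sets are distinct
  have hkl : iA k ≠ iB l := by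
    intro hEq
    obtain ⟨v, hv⟩ := hne (iA k)
    obtain ⟨a, rfl⟩ := hZA k v hv
    obtain ⟨b, hb'⟩ := hZB l (Sum.inl a) (hEq ▸ hv)
    exact absurd hb' (by simp)
  obtain ⟨u, hu, w, hw, huw⟩ := hadj hkl
  obtain ⟨a, rfl⟩ := hZA k u hu
  obtain ⟨b, rfl⟩ := hZB l w hw
  rw [myGraph_adj_lr] at huw
  exact huw (hz a b (hfuniq a k hu) (hguniq b l hw))



set_option maxHeartbeats 1000000 in
/-- For every `ε ∈ (0,1)` and all sufficiently large `n`, there is a graph `H` whose vertex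
set is partitioned into cliques `A`, `B` of size `n` each, every vertex has at most `εn`
non-neighbors, and `H` has no `K_t`-minor for any `t ≥ (1+2ε)n`. -/
theorem exists_good_graph :
    ∀ ε ∈ Set.Ioo (0 : ℝ) 1, ∃ n₀ : ℕ, ∀ n : ℕ, n₀ ≤ n →
      ∃ (V : Type) (_ : Fintype V) (H : SimpleGraph V) (A B : Finset V),
        Disjoint A B ∧ (∀ v : V, v ∈ A ∨ v ∈ B) ∧ A.card = n ∧ B.card = n ∧
        H.IsClique (A : Set V) ∧ H.IsClique (B : Set V) ∧
        (∀ v : V, (({w | w ≠ v ∧ ¬ H.Adj v w} : Set V).ncard : ℝ) ≤ ε * n) ∧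
        ∀ t : ℕ, (1 + 2 * ε) * n ≤ (t : ℝ) → ¬ H.HasKMinor t := by
  rintro ε ⟨hε0, hε1⟩
  set c : ℕ := ⌈(4:ℝ)/ε⌉₊ with hcdef
  set K : ℕ := 2 ^ c with hKdef
  haveI : NeZero K := ⟨by rw [hKdef]; positivity⟩
  have hc1 : 1 ≤ c := by
    rw [hcdef]
    exact Nat.one_le_iff_ne_zero.mpr (by
      intro h
      have := Nat.ceil_eq_zero.mp h
      have h4 : (0:ℝ) < 4/ε := by positivity
      linarith)
  have hK2 : 2 ≤ K := by
    rw [hKdef]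
    calc 2 = 2^1 := (pow_one 2).symm
      _ ≤ 2^c := Nat.pow_le_pow_right (by norm_num) hc1
  have hKR0 : (0:ℝ) < (K:ℝ) := by
    have : 0 < K := by omega
    exact_mod_cast this
  have hcR : (4:ℝ)/ε ≤ c := Nat.le_ceil _
  set s₀ : ℕ := ⌈(8:ℝ)/ε⌉₊ with hs₀def
  have hs₀R : (8:ℝ)/ε ≤ s₀ := Nat.le_ceil _
  set q : ℝ := ((K:ℝ)⁻¹) ^ (s₀ * s₀) with hqdef
  have hq0 : 0 < q := by rw [hqdef]; positivity
  have hq1 : q ≤ 1 := by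
    rw [hqdef]
    apply pow_le_one₀ (by positivity)
    rw [inv_le_one_iff₀]
    right
    exact_mod_cast le_trans (by norm_num) hK2
  set sR : ℝ := Real.exp (-(q * ε^2 / 4)) with hsRdef
  have hsR0 : 0 < sR := Real.exp_pos _
  have hsR1 : sR < 1 := by
    rw [hsRdef, Real.exp_lt_one_iff]
    have : 0 < q * ε^2/4 := by positivity
    linarith
  -- eventual smallness
  have h0 : Filter.Tendsto (fun k : ℕ => ((k:ℝ))^2 * sR ^ k) Filter.atTop (nhds 0) :=
    tendsto_pow_const_mul_const_pow_of_lt_one 2 hsR0.le hsR1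
  have h1 : Filter.Tendsto (fun m : ℕ => (((m+1:ℕ)):ℝ)^2 * sR ^ (m+1)) Filter.atTop (nhds 0) :=
    h0.comp (Filter.tendsto_add_atTop_nat 1)
  have h2 : Filter.Tendsto (fun m : ℕ => sR⁻¹ * ((((m+1:ℕ)):ℝ)^2 * sR ^ (m+1)))
      Filter.atTop (nhds 0) := by
    have := h1.const_mul sR⁻¹
    rwa [mul_zero] at this
  have htend : Filter.Tendsto (fun m : ℕ => ((m:ℝ)+1)^2 * sR ^ m) Filter.atTop (nhds 0) := by
    apply h2.congr
    intro m
    have hsne : sR ≠ 0 := ne_of_gt hsR0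
    push_cast
    rw [pow_succ]
    field_simp
    ring
  obtain ⟨n₁, hn₁⟩ := Filter.eventually_atTop.mp
    (htend.eventually_lt_const (by norm_num : (0:ℝ) < 1/2))
  refine ⟨max n₁ (⌈1/ε⌉₊ + 2), fun n hn => ?_⟩
  have hn₁' : n₁ ≤ n := le_trans (le_max_left _ _) hn
  have hnceil : ⌈1/ε⌉₊ + 2 ≤ n := le_trans (le_max_right _ _) hn
  have hn2 : 2 ≤ n := by omega
  have hεn1 : 1 ≤ ε * n := by
    have h1' : (1:ℝ)/ε ≤ ⌈1/ε⌉₊ := Nat.le_ceil _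
    have h2' : ((⌈1/ε⌉₊:ℕ):ℝ) ≤ n := by exact_mod_cast (by omega : ⌈1/ε⌉₊ ≤ n)
    calc (1:ℝ) = ε * (1/ε) := by field_simp
      _ ≤ ε * n := mul_le_mul_of_nonneg_left (le_trans h1' h2') hε0.le
  have hεn0 : (0:ℝ) ≤ ε * n := by positivity
  set e₀ : ℕ := ⌈ε * n⌉₊ with he₀def
  set m₁ : ℕ := ⌊ε * n⌋₊ + 1 with hm₁def
  have he₀1 : 1 ≤ e₀ := by
    have : (1:ℝ) ≤ (e₀:ℝ) := le_trans hεn1 (Nat.le_ceil _)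
    exact_mod_cast this
  have hfloorn : ⌊ε * n⌋₊ ≤ n := by
    have h1' : ((⌊ε * n⌋₊:ℕ):ℝ) ≤ ε * n := Nat.floor_le hεn0
    have h2' : ε * n ≤ n := by nlinarith
    exact_mod_cast le_trans h1' h2'
  have hm₁n : m₁ ≤ n * n := by
    have : n * 2 ≤ n * n := Nat.mul_le_mul_left n hn2
    omega
  -- Hdeg
  have hchoose : n.choose m₁ ≤ 2^n := by
    rcases le_or_gt m₁ n with h | h
    · calc n.choose m₁ ≤ ∑ i ∈ Finset.range (n+1), n.choose i :=
          Finset.single_le_sum (f := fun i => n.choose i) (fun i _ => Nat.zero_le _)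
            (Finset.mem_range.mpr (by omega))
        _ = 2^n := Nat.sum_range_choose n
    · rw [Nat.choose_eq_zero_of_lt h]; exact Nat.zero_le _
  have hcm : 4 * n ≤ c * m₁ := by
    have h2' : ε * n ≤ (m₁:ℝ) := by
      rw [hm₁def]
      push_cast
      exact (Nat.lt_floor_add_one (ε * n)).le
    have hbig : (4 * n : ℝ) ≤ (c:ℝ) * m₁ := by
      have hc0 : (0:ℝ) ≤ (4:ℝ)/ε := by positivity
      calc (4*n:ℝ) = (4/ε) * (ε * n) := by field_simp
        _ ≤ (c:ℝ) * m₁ := mul_le_mul hcR h2' hεn0 (le_trans hc0 hcR)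
    exact_mod_cast hbig
  have hKm : 2^(4*n) ≤ K^m₁ := by
    rw [hKdef, ← pow_mul]
    exact Nat.pow_le_pow_right (by norm_num) hcm
  have hnat : 8 * n * 2^n ≤ 2^(4*n) := by
    have h1' : n ≤ 2^n := (Nat.lt_two_pow_self).le
    calc 8 * n * 2^n ≤ 8 * 2^n * 2^n := by
          exact Nat.mul_le_mul_right _ (Nat.mul_le_mul_left 8 h1')
      _ = 2^(3 + n + n) := by rw [pow_add, pow_add]; norm_num
      _ ≤ 2^(4*n) := Nat.pow_le_pow_right (by norm_num) (by omega)
  have Hdeg : (2 * n * (n.choose m₁) : ℝ) * ((K : ℝ) ^ m₁)⁻¹ ≤ 1 / 4 := by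
    have hnat2 : 4 * (2 * n * n.choose m₁) ≤ K ^ m₁ := by
      calc 4 * (2 * n * n.choose m₁) ≤ 4 * (2 * n * 2^n) := by
            apply Nat.mul_le_mul_left
            exact Nat.mul_le_mul_left _ hchoose
        _ = 8 * n * 2^n := by ring
        _ ≤ 2^(4*n) := hnat
        _ ≤ K^m₁ := hKm
    have hKpos : (0:ℝ) < (K:ℝ)^m₁ := by positivity
    rw [mul_inv_le_iff₀ hKpos]
    have := (Nat.cast_le (α := ℝ)).mpr hnat2
    push_cast at this
    linarith
  -- Hfam
  set γ₀ : ℕ := e₀ - n/(s₀+1) with hγdef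
  have hdivle : ((n/(s₀+1) : ℕ) : ℝ) ≤ ε * n / 8 := by
    have h1' : ((n/(s₀+1) : ℕ) : ℝ) ≤ (n:ℝ)/(((s₀:ℕ):ℝ)+1) := by
      have := Nat.cast_div_le (m := n) (n := s₀ + 1) (α := ℝ)
      push_cast at this
      exact this
    have h8 : (0:ℝ) < 8/ε := by positivity
    have h3' : (n:ℝ)/(((s₀:ℕ):ℝ)+1) ≤ (n:ℝ)/((8:ℝ)/ε) := by
      apply div_le_div_of_nonneg_left (by positivity) h8
      linarith [hs₀R]
    have h4' : (n:ℝ)/((8:ℝ)/ε) = ε * n / 8 := by field_simp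
    linarith
  have he₀R : ε * n ≤ (e₀:ℝ) := Nat.le_ceil _
  have hγR : ε * n / 2 ≤ (γ₀:ℝ) := by
    have hle : n/(s₀+1) ≤ e₀ := by
      have : ((n/(s₀+1):ℕ):ℝ) ≤ (e₀:ℝ) := by linarith
      exact_mod_cast this
    rw [hγdef, Nat.cast_sub hle]
    linarith
  have hexp : ((1:ℝ) - q) ^ (γ₀*γ₀) ≤ sR ^ (n*n) := by
    have h1' : (1:ℝ) - q ≤ Real.exp (-q) := by
      have := Real.add_one_le_exp (-q)
      linarith
    have h2' : ((1:ℝ) - q) ^ (γ₀*γ₀) ≤ Real.exp (-q) ^ (γ₀*γ₀) :=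
      pow_le_pow_left₀ (by linarith) h1' _
    have h3' : Real.exp (-q) ^ (γ₀*γ₀) = Real.exp (-(q * ((γ₀*γ₀ : ℕ):ℝ))) := by
      rw [← Real.exp_nat_mul]
      congr 1
      push_cast
      ring
    have h4' : sR ^ (n*n) = Real.exp (-(q * ε^2 / 4 * (((n*n:ℕ)):ℝ))) := by
      rw [hsRdef, ← Real.exp_nat_mul]
      congr 1
      push_cast
      ring
    have h5' : (-(q * ((γ₀*γ₀ : ℕ):ℝ))) ≤ (-(q * ε^2 / 4 * (((n*n:ℕ)):ℝ))) := by
      have hγ2 : ε*n/2 * (ε*n/2) ≤ ((γ₀:ℝ)) * γ₀ :=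
        mul_le_mul hγR hγR (by positivity) (Nat.cast_nonneg _)
      push_cast
      nlinarith [hq0.le]
    calc ((1:ℝ) - q) ^ (γ₀*γ₀) ≤ Real.exp (-q) ^ (γ₀*γ₀) := h2'
      _ = Real.exp (-(q * ((γ₀*γ₀ : ℕ):ℝ))) := h3'
      _ ≤ Real.exp (-(q * ε^2 / 4 * (((n*n:ℕ)):ℝ))) := Real.exp_le_exp.mpr h5'
      _ = sR ^ (n*n) := h4'.symm
  have hfam2 : ((n:ℝ)+1)^(2*n) * sR^(n*n) ≤ 1/4 := by
    have h5' : ((n:ℝ)+1)^2 * sR^n < 1/2 := hn₁ n hn₁'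
    have h6' : ((n:ℝ)+1)^(2*n) * sR^(n*n) = (((n:ℝ)+1)^2 * sR^n)^n := by
      rw [mul_pow, ← pow_mul, ← pow_mul]
    rw [h6']
    calc (((n:ℝ)+1)^2 * sR^n)^n ≤ (1/2:ℝ)^n := pow_le_pow_left₀ (by positivity) h5'.le n
      _ ≤ (1/2:ℝ)^2 := pow_le_pow_of_le_one (by norm_num) (by norm_num) hn2
      _ = 1/4 := by norm_num
  have Hfam : ((e₀ + 1 : ℝ)) ^ (2 * n) * (1 - q) ^ (γ₀ * γ₀) ≤ 1/4 := by
    have he₀n : (e₀:ℝ) + 1 ≤ (n:ℝ) + 1 := by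
      have : e₀ ≤ n := by
        rw [he₀def, Nat.ceil_le]
        push_cast
        nlinarith
      have := (Nat.cast_le (α := ℝ)).mpr this
      linarith
    have hpow1 : ((e₀:ℝ) + 1) ^ (2*n) ≤ ((n:ℝ)+1)^(2*n) :=
      pow_le_pow_left₀ (by positivity) he₀n _
    calc ((e₀ + 1 : ℝ)) ^ (2 * n) * (1 - q) ^ (γ₀ * γ₀)
        ≤ ((n:ℝ)+1)^(2*n) * (sR^(n*n)) := by
          apply mul_le_mul hpow1 hexp (pow_nonneg (by linarith) _) (by positivity)
      _ ≤ 1/4 := hfam2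
  -- get the good matrix
  have Hfam' : ((e₀ + 1 : ℝ)) ^ (2 * n)
      * (1 - ((K : ℝ)⁻¹) ^ (s₀ * s₀)) ^ ((e₀ - n / (s₀ + 1)) * (e₀ - n / (s₀ + 1))) ≤ 1/4 := by
    rw [← hqdef, ← hγdef]
    exact Hfam
  obtain ⟨ω, hrow, hcol, hesc⟩ := exists_good_omega n K e₀ m₁ s₀ hK2 he₀1 hm₁n Hdeg
    (by exact_mod_cast Hfam')
  -- build the graph
  refine ⟨Fin n ⊕ Fin n, inferInstance, myGraph n K ω,
    univ.map ⟨Sum.inl, Sum.inl_injective⟩, univ.map ⟨Sum.inr, Sum.inr_injective⟩,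
    ?_, ?_, ?_, ?_, ?_, ?_, ?_, ?_⟩
  · rw [Finset.disjoint_left]
    intro v hv hv'
    simp only [Finset.mem_map, Function.Embedding.coeFn_mk] at hv hv'
    obtain ⟨a, -, rfl⟩ := hv
    obtain ⟨b, -, h⟩ := hv'
    exact absurd h (by simp)
  · intro v
    rcases v with a | b
    · left; simp
    · right; simp
  · simp
  · simp
  · intro v hv w hw hvw
    simp only [Finset.coe_map, Set.mem_image, Finset.mem_coe, Function.Embedding.coeFn_mk] at hv hw
    obtain ⟨a, -, rfl⟩ := hv
    obtain ⟨a', -, rfl⟩ := hw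
    rw [myGraph_adj_ll]
    intro h
    exact hvw (by rw [h])
  · intro v hv w hw hvw
    simp only [Finset.coe_map, Set.mem_image, Finset.mem_coe, Function.Embedding.coeFn_mk] at hv hw
    obtain ⟨b, -, rfl⟩ := hv
    obtain ⟨b', -, rfl⟩ := hw
    rw [myGraph_adj_rr]
    intro h
    exact hvw (by rw [h])
  · -- non-neighbour counts
    have hfloorR : ((⌊ε * n⌋₊:ℕ):ℝ) ≤ ε * n := Nat.floor_le hεn0
    intro v
    rcases v with a | b
    · have hset : {w | w ≠ Sum.inl a ∧ ¬ (myGraph n K ω).Adj (Sum.inl a) w}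
          = (↑(((univ.filter fun b => ω (a,b) = 0)).map
              (⟨Sum.inr, Sum.inr_injective⟩ : Fin n ↪ Fin n ⊕ Fin n)) : Set (Fin n ⊕ Fin n)) := by
        ext w
        rcases w with a' | b'
        · simp only [Set.mem_setOf_eq, Finset.coe_map, Set.mem_image, Finset.mem_coe,
            Function.Embedding.coeFn_mk, myGraph_adj_ll]
          constructor
          · rintro ⟨hne', hnadj⟩
            exact absurd (by rw [not_not.mp hnadj]) hne'
          · rintro ⟨x, -, h⟩
            exact absurd h (by simp)
        · simp only [Set.mem_setOf_eq, Finset.coe_map, Set.mem_image, Finset.mem_coe,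
            Function.Embedding.coeFn_mk, myGraph_adj_lr, not_not]
          constructor
          · rintro ⟨-, h⟩
            exact ⟨b', by simp [h], rfl⟩
          · rintro ⟨b, hb, hbeq⟩
            have : b = b' := by simpa using hbeq
            subst this
            refine ⟨by simp, by simpa using hb⟩
      rw [hset, Set.ncard_coe_finset, Finset.card_map]
      have hlt := hrow a
      have hle : (univ.filter fun b => ω (a,b) = 0).card ≤ ⌊ε * n⌋₊ := by
        rw [hm₁def] at hlt
        omega
      calc (((univ.filter fun b => ω (a,b) = 0).card:ℕ):ℝ) ≤ ((⌊ε * n⌋₊:ℕ):ℝ) := by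
            exact_mod_cast hle
        _ ≤ ε * n := hfloorR
    · have hset : {w | w ≠ Sum.inr b ∧ ¬ (myGraph n K ω).Adj (Sum.inr b) w}
          = (↑(((univ.filter fun a => ω (a,b) = 0)).map
              (⟨Sum.inl, Sum.inl_injective⟩ : Fin n ↪ Fin n ⊕ Fin n)) : Set (Fin n ⊕ Fin n)) := by
        ext w
        rcases w with a' | b'
        · simp only [Set.mem_setOf_eq, Finset.coe_map, Set.mem_image, Finset.mem_coe,
            Function.Embedding.coeFn_mk, myGraph_adj_rl, not_not]
          constructor
          · rintro ⟨-, h⟩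
            exact ⟨a', by simp [h], rfl⟩
          · rintro ⟨a, ha, haeq⟩
            have : a = a' := by simpa using haeq
            subst this
            refine ⟨by simp, by simpa using ha⟩
        · simp only [Set.mem_setOf_eq, Finset.coe_map, Set.mem_image, Finset.mem_coe,
            Function.Embedding.coeFn_mk, myGraph_adj_rr]
          constructor
          · rintro ⟨hne', hnadj⟩
            exact absurd (by rw [not_not.mp hnadj]) hne'
          · rintro ⟨x, -, h⟩
            exact absurd h (by simp)
      rw [hset, Set.ncard_coe_finset, Finset.card_map]
      have hlt := hcol b
      have hle : (univ.filter fun a => ω (a,b) = 0).card ≤ ⌊ε * n⌋₊ := by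
        rw [hm₁def] at hlt
        omega
      calc (((univ.filter fun a => ω (a,b) = 0).card:ℕ):ℝ) ≤ ((⌊ε * n⌋₊:ℕ):ℝ) := by
            exact_mod_cast hle
        _ ≤ ε * n := hfloorR
  · intro t ht
    apply no_minor n K e₀ (by omega) he₀1 ω hesc t
    have he₀lt : (e₀:ℝ) < ε * n + 1 := Nat.ceil_lt_add_one hεn0
    have : ((n + e₀ : ℕ):ℝ) ≤ (t:ℝ) := by
      push_cast
      nlinarith
    exact_mod_cast this
end

section
/- Let H be a graph with vertex set A ∪ B, |A| = |B| = n, where A and B are cliques, and suppose the bipartite complement G (with edges the non-adjacent pairs between A and B) has the property: for every X ⊆ A with |X| ≥ εn and every collection of ≥ εn pairwise disjoint non-empty subsets of B each of size at most ⌈1/ε⌉ there is a vertex of X adjacent in G to all vertices of one of the subsets, and symmetrically with A and B swapped. Then H contains no K_t-minor for any integer t ≥ (1+2ε)n. -/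
open Finset

open scoped Classical in
theorem aux_no_minor {V : Type*} [Fintype V] [DecidableEq V]
    (n : ℕ) (hn : 0 < n) (ε : ℝ) (hε0 : 0 < ε)
    (A B : Finset V) (hAB : Disjoint A B) (hcover : ∀ v : V, v ∈ A ∨ v ∈ B)
    (hAn : A.card = n) (hBn : B.card = n)
    (H G : SimpleGraph V)
    (hcompl : ∀ a ∈ A, ∀ b ∈ B, (H.Adj a b ↔ ¬ G.Adj a b))
    (hprop : ∀ X : Finset V, X ⊆ A → ε * n ≤ (X.card : ℝ) →
      ∀ k : ℕ, ε * n ≤ (k : ℝ) → ∀ Y : Fin k → Finset V,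
        (∀ j, Y j ⊆ B) → (∀ j, (Y j).Nonempty) → Pairwise (Function.onFun Disjoint Y) →
        (∀ j, (Y j).card ≤ ⌈1 / ε⌉₊) →
        ∃ x ∈ X, ∃ j : Fin k, ∀ y ∈ Y j, G.Adj x y)
    (t : ℕ) (ht : (1 + 2 * ε) * n ≤ (t : ℝ))
    (Z : Fin t → Set V)
    (hne : ∀ i, (Z i).Nonempty)
    (hdisj : Pairwise (Function.onFun Disjoint Z))
    (hpair : Pairwise fun i j => ∃ a ∈ Z i, ∃ b ∈ Z j, H.Adj a b)
    (hSA : ε * n ≤ (((Finset.univ.filter (fun i : Fin t =>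
        ((Z i).toFinite.toFinset).card = 1 ∧ (Z i).toFinite.toFinset ⊆ A)).card : ℝ))) :
    False := by
  set m := ⌈1 / ε⌉₊ with hm
  set W : Fin t → Finset V := fun i => (Z i).toFinite.toFinset with hWdef
  have hmemW : ∀ i x, x ∈ W i ↔ x ∈ Z i := fun i x => Set.Finite.mem_toFinset _
  have hWne : ∀ i, (W i).Nonempty := fun i =>
    ⟨(hne i).choose, (hmemW _ _).2 (hne i).choose_spec⟩
  have hWdisj : ∀ i j : Fin t, i ≠ j → Disjoint (W i) (W j) := by
    intro i j hij
    rw [Finset.disjoint_left]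
    intro a ha ha'
    exact (Set.disjoint_left.1 (hdisj hij)) ((hmemW _ _).1 ha) ((hmemW _ _).1 ha')
  -- generic counting: disjoint subfamilies inside a set C
  have hsum : ∀ (s : Finset (Fin t)) (C : Finset V) (f : Fin t → Finset V),
      (∀ i, f i ⊆ W i) → (∀ i ∈ s, f i ⊆ C) → ∑ i ∈ s, (f i).card ≤ C.card := by
    intro s C f hfW hfC
    have hdisj' : ∀ x ∈ s, ∀ y ∈ s, x ≠ y → Disjoint (f x) (f y) := by
      intro x _ y _ hxy
      exact (hWdisj x y hxy).mono (hfW x) (hfW y)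
    calc ∑ i ∈ s, (f i).card = (s.biUnion f).card := (Finset.card_biUnion hdisj').symm
      _ ≤ C.card := Finset.card_le_card (Finset.biUnion_subset.2 hfC)
  set SA := Finset.univ.filter (fun i : Fin t => (W i).card = 1 ∧ W i ⊆ A) with hSAdef
  set TB := Finset.univ.filter (fun i : Fin t => W i ⊆ B) with hTBdef
  set small := Finset.univ.filter (fun i : Fin t => W i ⊆ B ∧ (W i).card ≤ m) with hsmalldef
  set big := Finset.univ.filter (fun i : Fin t => W i ⊆ B ∧ m + 1 ≤ (W i).card) with hbigdef
  -- t ≤ TB.card + n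
  have hTB : t ≤ TB.card + n := by
    have h1 : ∀ i ∈ Finset.univ \ TB, 1 ≤ ((W i ∩ A)).card := by
      intro i hi
      rw [Finset.mem_sdiff, hTBdef, Finset.mem_filter] at hi
      have hns : ¬ W i ⊆ B := fun h => hi.2 ⟨Finset.mem_univ i, h⟩
      obtain ⟨x, hx, hxB⟩ := Finset.not_subset.1 hns
      have hxA : x ∈ A := (hcover x).resolve_right hxB
      exact Finset.card_pos.2 ⟨x, Finset.mem_inter.2 ⟨hx, hxA⟩⟩
    have h2 : (Finset.univ \ TB).card ≤ ∑ i ∈ Finset.univ \ TB, (W i ∩ A).card := by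
      simpa using Finset.card_nsmul_le_sum (Finset.univ \ TB) (fun i => (W i ∩ A).card) 1 h1
    have h3 : ∑ i ∈ Finset.univ \ TB, (W i ∩ A).card ≤ n := by
      have := hsum (Finset.univ \ TB) A (fun i => W i ∩ A)
        (fun i => Finset.inter_subset_left) (fun i _ => Finset.inter_subset_right)
      simpa [hAn] using this
    have h4 : (Finset.univ \ TB).card = t - TB.card := by
      rw [Finset.card_sdiff_of_subset (Finset.subset_univ _), Finset.card_univ, Fintype.card_fin]
    have h5 : TB.card ≤ t := by
      have := Finset.card_le_card (Finset.subset_univ TB)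
      simpa using this
    omega
  -- TB.card ≤ small.card + big.card
  have hsplit : TB.card ≤ small.card + big.card := by
    have hsub : TB ⊆ small ∪ big := by
      intro i hi
      rw [hTBdef, Finset.mem_filter] at hi
      rcases le_or_gt (W i).card m with h | h
      · exact Finset.mem_union_left _ (Finset.mem_filter.2 ⟨Finset.mem_univ i, hi.2, h⟩)
      · exact Finset.mem_union_right _ (Finset.mem_filter.2 ⟨Finset.mem_univ i, hi.2, h⟩)
    exact (Finset.card_le_card hsub).trans (Finset.card_union_le _ _)
  -- big.card * (m+1) ≤ n
  have hbig : big.card * (m + 1) ≤ n := by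
    calc big.card * (m + 1) = ∑ _i ∈ big, (m + 1) := by
          rw [Finset.sum_const, smul_eq_mul]
      _ ≤ ∑ i ∈ big, (W i).card := Finset.sum_le_sum (fun i hi => by
          rw [hbigdef, Finset.mem_filter] at hi; exact hi.2.2)
      _ ≤ B.card := by
          refine (hsum big B W (fun i => le_refl _) ?_)
          intro i hi
          rw [hbigdef, Finset.mem_filter] at hi
          exact hi.2.1
      _ = n := hBn
  -- 1 ≤ ε * m
  have hεm : 1 ≤ ε * (m : ℝ) := by
    have h1 : (1 / ε : ℝ) ≤ (m : ℝ) := Nat.le_ceil _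
    rw [div_le_iff₀ hε0] at h1
    linarith [mul_comm ε (m : ℝ) ▸ h1]
  -- ε * n ≤ small.card
  have hsmallR : ε * n ≤ (small.card : ℝ) := by
    have c1 : (t : ℝ) ≤ (TB.card : ℝ) + n := by exact_mod_cast hTB
    have c2 : (TB.card : ℝ) ≤ (small.card : ℝ) + (big.card : ℝ) := by exact_mod_cast hsplit
    have c3 : (big.card : ℝ) * ((m : ℝ) + 1) ≤ n := by exact_mod_cast hbig
    have c4 : (0 : ℝ) ≤ (big.card : ℝ) := Nat.cast_nonneg _
    have c5 : (big.card : ℝ) ≤ ε * n := by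
      nlinarith
    linarith
  -- build X and Y and apply hprop
  set X := SA.biUnion W with hXdef
  have hXA : X ⊆ A := Finset.biUnion_subset.2 (fun i hi => (Finset.mem_filter.1 hi).2.2)
  have hXcard : X.card = SA.card := by
    rw [hXdef, Finset.card_biUnion (fun x _ y _ hxy => hWdisj x y hxy)]
    rw [Finset.sum_congr rfl (fun i hi => (Finset.mem_filter.1 hi).2.1)]
    simp
  set k := small.card with hk
  set e := small.orderIsoOfFin rfl with he
  set Y : Fin k → Finset V := fun j => W ((e j : Fin t)) with hYdef
  have hY1 : ∀ j, Y j ⊆ B := fun j => (Finset.mem_filter.1 (e j).2).2.1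
  have hY2 : ∀ j, (Y j).Nonempty := fun j => hWne _
  have hY3 : Pairwise (Function.onFun Disjoint Y) := by
    intro j j' hjj'
    refine hWdisj _ _ (fun h => hjj' ?_)
    exact e.injective (Subtype.ext h)
  have hY4 : ∀ j, (Y j).card ≤ m := fun j => (Finset.mem_filter.1 (e j).2).2.2
  obtain ⟨x, hx, j, hadj⟩ := hprop X hXA (by rw [hXcard]; exact hSA) k hsmallR Y hY1 hY2 hY3 hY4
  obtain ⟨i, hiSA, hxi⟩ := Finset.mem_biUnion.1 hx
  have hi := (Finset.mem_filter.1 hiSA).2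
  set j' : Fin t := (e j : Fin t) with hj'
  have hij : i ≠ j' := by
    intro h
    have hxB : x ∈ B := by
      rw [h] at hxi
      exact hY1 j hxi
    exact Finset.disjoint_left.1 hAB (hi.2 hxi) hxB
  obtain ⟨a, haZ, b, hbZ, hab⟩ := hpair hij
  have haW : a ∈ W i := (hmemW _ _).2 haZ
  have hax : a = x := Finset.card_le_one.1 (le_of_eq hi.1) a haW x hxi
  have hbW : b ∈ Y j := (hmemW _ _).2 hbZ
  have hbB : b ∈ B := hY1 j hbW
  have hGxb : G.Adj x b := hadj b hbW
  exact (hcompl x (hi.2 hxi) b hbB).1 (hax ▸ hab) hGxb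

/-- Let `H` be a graph on `A ∪ B` with `|A| = |B| = n`, where `A` and `B` are cliques and the
adjacency between `A` and `B` is the complement of a bipartite graph `G`. If `G` has the
property that for every `X` on one side with `|X| ≥ εn` and every collection of at least `εn`
pairwise disjoint nonempty subsets of the other side, each of size at most `⌈1/ε⌉`, some vertex
of `X` is `G`-adjacent to all of one of the subsets, then `H` has no `K_t`-minor for any
integer `t ≥ (1+2ε)n`. -/
theorem no_minor_of_bipartite_property {V : Type*} [Fintype V] [DecidableEq V]
    (n : ℕ) (hn : 0 < n) (ε : ℝ) (hε : ε ∈ Set.Ioo (0 : ℝ) 1)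
    (A B : Finset V) (hAB : Disjoint A B) (hunion : A ∪ B = Finset.univ)
    (hA : A.card = n) (hB : B.card = n)
    (H G : SimpleGraph V)
    (hHA : H.IsClique (A : Set V)) (hHB : H.IsClique (B : Set V))
    (hGbip : ∀ u v, G.Adj u v → (u ∈ A ∧ v ∈ B) ∨ (u ∈ B ∧ v ∈ A))
    (hcompl : ∀ a ∈ A, ∀ b ∈ B, (H.Adj a b ↔ ¬ G.Adj a b))
    (hprop1 : ∀ X : Finset V, X ⊆ A → ε * n ≤ (X.card : ℝ) →
      ∀ k : ℕ, ε * n ≤ (k : ℝ) → ∀ Y : Fin k → Finset V,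
        (∀ j, Y j ⊆ B) → (∀ j, (Y j).Nonempty) → Pairwise (Function.onFun Disjoint Y) →
        (∀ j, (Y j).card ≤ ⌈1 / ε⌉₊) →
        ∃ x ∈ X, ∃ j : Fin k, ∀ y ∈ Y j, G.Adj x y)
    (hprop2 : ∀ X : Finset V, X ⊆ B → ε * n ≤ (X.card : ℝ) →
      ∀ k : ℕ, ε * n ≤ (k : ℝ) → ∀ Y : Fin k → Finset V,
        (∀ j, Y j ⊆ A) → (∀ j, (Y j).Nonempty) → Pairwise (Function.onFun Disjoint Y) →
        (∀ j, (Y j).card ≤ ⌈1 / ε⌉₊) →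
        ∃ x ∈ X, ∃ j : Fin k, ∀ y ∈ Y j, G.Adj x y) :
    ∀ t : ℕ, (1 + 2 * ε) * n ≤ (t : ℝ) → ¬ H.HasKMinor t := by
  classical
  obtain ⟨hε0, hε1⟩ := hε
  intro t ht hmin
  obtain ⟨Z, hne, hdisj, _hconn, hpair⟩ := hmin
  set W : Fin t → Finset V := fun i => (Z i).toFinite.toFinset with hWdef
  have hmemW : ∀ i x, x ∈ W i ↔ x ∈ Z i := fun i x => Set.Finite.mem_toFinset _
  have hcover : ∀ v : V, v ∈ A ∨ v ∈ B := by
    intro v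
    have : v ∈ A ∪ B := by rw [hunion]; exact Finset.mem_univ v
    exact Finset.mem_union.1 this
  have hWne : ∀ i, 1 ≤ (W i).card := fun i =>
    Finset.card_pos.2 ⟨(hne i).choose, (hmemW _ _).2 (hne i).choose_spec⟩
  have hWdisj : ∀ i j : Fin t, i ≠ j → Disjoint (W i) (W j) := by
    intro i j hij
    rw [Finset.disjoint_left]
    intro a ha ha'
    exact (Set.disjoint_left.1 (hdisj hij)) ((hmemW _ _).1 ha) ((hmemW _ _).1 ha')
  have hcardV : (Finset.univ : Finset V).card = 2 * n := by
    rw [← hunion, Finset.card_union_of_disjoint hAB, hA, hB]; ring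
  have hsumall : ∑ i : Fin t, (W i).card ≤ 2 * n := by
    calc ∑ i : Fin t, (W i).card = (Finset.univ.biUnion W).card :=
          (Finset.card_biUnion (fun x _ y _ hxy => hWdisj x y hxy)).symm
      _ ≤ (Finset.univ : Finset V).card := Finset.card_le_card (Finset.subset_univ _)
      _ = 2 * n := hcardV
  set S := Finset.univ.filter (fun i : Fin t => (W i).card = 1) with hSdef
  have h2t : 2 * t ≤ S.card + 2 * n := by
    have key : ∀ i : Fin t, 2 ≤ (W i).card + (if (W i).card = 1 then 1 else 0) := by
      intro i
      rcases eq_or_ne ((W i).card) 1 with h | h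
      · simp [h]
      · have := hWne i
        simp only [h, if_neg]
        omega
    have : 2 * t = ∑ _i : Fin t, 2 := by simp [mul_comm]
    rw [this]
    calc ∑ _i : Fin t, 2 ≤ ∑ i : Fin t, ((W i).card + (if (W i).card = 1 then 1 else 0)) :=
          Finset.sum_le_sum (fun i _ => key i)
      _ = (∑ i : Fin t, (W i).card) + ∑ i : Fin t, (if (W i).card = 1 then 1 else 0) :=
          Finset.sum_add_distrib
      _ = (∑ i : Fin t, (W i).card) + S.card := by
          rw [hSdef, Finset.card_filter]
      _ ≤ 2 * n + S.card := by omega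
      _ = S.card + 2 * n := by omega
  set SA := Finset.univ.filter (fun i : Fin t => (W i).card = 1 ∧ W i ⊆ A) with hSAdef
  set SB := Finset.univ.filter (fun i : Fin t => (W i).card = 1 ∧ W i ⊆ B) with hSBdef
  have hSsub : S ⊆ SA ∪ SB := by
    intro i hi
    have hci : (W i).card = 1 := (Finset.mem_filter.1 hi).2
    obtain ⟨x, hx⟩ := Finset.card_eq_one.1 hci
    rcases hcover x with hxA | hxB
    · exact Finset.mem_union_left _ (Finset.mem_filter.2
        ⟨Finset.mem_univ i, hci, by rw [hx]; exact Finset.singleton_subset_iff.2 hxA⟩)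
    · exact Finset.mem_union_right _ (Finset.mem_filter.2
        ⟨Finset.mem_univ i, hci, by rw [hx]; exact Finset.singleton_subset_iff.2 hxB⟩)
  have hScard : S.card ≤ SA.card + SB.card :=
    (Finset.card_le_card hSsub).trans (Finset.card_union_le _ _)
  have hε01 : 0 < ε := hε0
  have hnR : (0:ℝ) < n := by exact_mod_cast hn
  have hcase : ε * n ≤ (SA.card : ℝ) ∨ ε * n ≤ (SB.card : ℝ) := by
    by_contra hcon
    push_neg at hcon
    have c1 : (2 * t : ℝ) ≤ (S.card : ℝ) + 2 * n := by exact_mod_cast h2t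
    have c2 : (S.card : ℝ) ≤ (SA.card : ℝ) + (SB.card : ℝ) := by exact_mod_cast hScard
    nlinarith [hcon.1, hcon.2]
  rcases hcase with hSAc | hSBc
  · exact aux_no_minor n hn ε hε0 A B hAB hcover hA hB H G hcompl hprop1 t ht Z hne hdisj
      hpair hSAc
  · have hcompl' : ∀ a ∈ B, ∀ b ∈ A, (H.Adj a b ↔ ¬ G.Adj a b) := by
      intro a ha b hb
      rw [H.adj_comm, G.adj_comm]
      exact hcompl b hb a ha
    exact aux_no_minor n hn ε hε0 B A hAB.symm (fun v => (hcover v).symm) hB hA H G hcompl'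
      hprop2 t ht Z hne hdisj hpair hSBc
end
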